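/- arXiv:2204.13729 — 4 statements merged into one kernel-verified Lean document; each statement's English description precedes it below -/
import Mathlib

section
/- Let h := (#Φ0)/r be the Coxeter number of W0, let E′ ⊆ E be the ℝ-span of the coroots {α∨ : α ∈ Φ0}, and let pr_{E′} : E → E′ be the orthogonal projection. Then for all y ∈ E: (1/h)·∑_{α ∈ Φ0+} α(y)·α∨ = pr_{E′}(y). In particular, the coweight lattice P∨ := {λ ∈ E′ : α(λ) ∈ ℤ for all α ∈ Φ0} satisfies P∨ ⊆ (1/h)·Q∨. -/
open scoped InnerProductSpace Classical

noncomputable section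

namespace SSV

variable {E : Type*} [NormedAddCommGroup E] [InnerProductSpace ℝ E]

/-- The coroot `α∨ = (2/‖α‖²)·α` of `α ∈ E`, under the identification of `E*` with `E`
via the inner product (a root `α` acts on `E` as the linear functional `y ↦ ⟪α,y⟫`). -/
def cv (α : E) : E := (2 / ⟪α, α⟫_ℝ) • α

/-- The linear functional `y ↦ ⟪α∨, y⟫ = 2⟪α,y⟫/‖α‖²`. -/
def rootForm (α : E) : E →ₗ[ℝ] ℝ where
  toFun y := 2 / ⟪α, α⟫_ℝ * ⟪α, y⟫_ℝ
  map_add' y z := by rw [inner_add_right]; ring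
  map_smul' c y := by
    simp only [RingHom.id_apply, smul_eq_mul, real_inner_smul_right]
    ring

/-- The orthogonal reflection `s_α : y ↦ y − α(y)·α∨` in the hyperplane `α = 0`. -/
def lrefl (α : E) : E ≃ₗ[ℝ] E :=
  if h : ⟪α, α⟫_ℝ = 0 then LinearEquiv.refl ℝ E
  else
    Module.reflection (f := rootForm α) (x := α)
      (by simp only [rootForm, LinearMap.coe_mk, AddHom.coe_mk]; field_simp)

/-- The affine reflection `s_a : y ↦ y − a(y)·α∨` associated to the affine root
`a = (α, c)`, i.e. to the affine function `y ↦ α(y) + c = ⟪α,y⟫ + c` on `E`. -/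
def aRefl (α : E) (c : ℝ) : E ≃ᵃ[ℝ] E :=
  (lrefl α).toAffineEquiv.trans (AffineEquiv.constVAdd ℝ E (-(c • cv α)))

/-- The translation `τ(μ) : y ↦ y + μ`. -/
def tr (μ : E) : E ≃ᵃ[ℝ] E := AffineEquiv.constVAdd ℝ E μ

/-- `η = χ_{ℤ_{>0}} − χ_{ℤ_{≤0}} : ℝ → {−1,0,1}`. -/
def eta (x : ℝ) : ℤ :=
  if ∃ n : ℤ, x = (n : ℝ) then (if 0 < x then 1 else -1) else 0

/-- `sgn(ℓ) = ℓ/|ℓ|` for `ℓ ≠ 0`, and `sgn(0) = 1`. -/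
def sgnz (l : ℤ) : ℤ := if 0 ≤ l then 1 else -1

/-- The alternating word `j j' j j' ⋯` of length `m`. -/
def altList {n : ℕ} (j j' : Fin n) (m : ℕ) : List (Fin n) :=
  (List.range m).map fun s => if s % 2 = 0 then j else j'

/-- Evaluation of the affine function `a = (α, c)` at `y`: `a(y) = α(y) + c`. -/
def aval (a : E × ℝ) (y : E) : ℝ := ⟪a.1, y⟫_ℝ + a.2

/-- The contragredient action of `w` on affine roots: `(w·a)(y) = a(w⁻¹·y)`. -/
def wact (w : E ≃ᵃ[ℝ] E) (a : E × ℝ) : E × ℝ :=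
  (w.linear a.1, a.2 - ⟪w.linear a.1, w 0⟫_ℝ)

/-- The relation `y ≺_α z`. -/
def precA (α : E) (y z : E) : Prop :=
  (∃ l : ℤ, y = aRefl α (l : ℝ) z) ∧
    (|⟪α, y⟫_ℝ| < |⟪α, z⟫_ℝ| ∨ (⟪α, y⟫_ℝ = -⟪α, z⟫_ℝ ∧ 0 < ⟪α, y⟫_ℝ))

/-- The data of a reduced irreducible finite root system `Φ0` realised in `E* ≅ E`,
normalised so that long roots have squared length `2/m²`, together with a choice of
positive roots, simple roots `α_1, …, α_r`, and the corresponding highest root `φ`. -/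
structure Data (E : Type*) [NormedAddCommGroup E] [InnerProductSpace ℝ E] where
  r : ℕ
  r_pos : 0 < r
  m : ℕ
  m_pos : 0 < m
  Φ0 : Finset E
  pos : Finset E
  simple : Fin r → E
  hroot : E
  root_ne_zero : ∀ α ∈ Φ0, α ≠ 0
  root_neg_mem : ∀ α ∈ Φ0, -α ∈ Φ0
  root_reduced : ∀ α ∈ Φ0, ∀ c : ℝ, c • α ∈ Φ0 → c = 1 ∨ c = -1
  root_refl_mem : ∀ α ∈ Φ0, ∀ β ∈ Φ0, aRefl α 0 β ∈ Φ0
  root_crystal : ∀ α ∈ Φ0, ∀ β ∈ Φ0, ∃ n : ℤ, ⟪cv β, α⟫_ℝ = (n : ℝ)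
  root_irred : ∀ A B : Set E, (Φ0 : Set E) = A ∪ B → A.Nonempty → B.Nonempty →
    (∀ a ∈ A, ∀ b ∈ B, ⟪a, b⟫_ℝ = 0) → False
  root_norm_le : ∀ α ∈ Φ0, ⟪α, α⟫_ℝ ≤ 2 / (m : ℝ) ^ 2
  root_norm_int : ∀ α ∈ Φ0, ∃ n : ℤ, (n : ℝ) * ⟪α, α⟫_ℝ = 2
  pos_subset : pos ⊆ Φ0
  pos_dichotomy : ∀ α ∈ Φ0, (α ∈ pos ∧ -α ∉ pos) ∨ (α ∉ pos ∧ -α ∈ pos)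
  simple_mem_pos : ∀ i, simple i ∈ pos
  simple_indep : LinearIndependent ℝ simple
  pos_nat_comb : ∀ α ∈ pos, ∃ n : Fin r → ℕ, α = ∑ i, (n i : ℝ) • simple i
  hroot_mem_pos : hroot ∈ pos
  hroot_long : ⟪hroot, hroot⟫_ℝ = 2 / (m : ℝ) ^ 2
  hroot_highest : ∀ α ∈ Φ0, ∃ n : Fin r → ℕ, hroot - α = ∑ i, (n i : ℝ) • simple i

namespace Data

variable (D : Data E)

/-- The coroot lattice `Q∨`. -/
def Qv : AddSubgroup E := AddSubgroup.closure (cv '' (D.Φ0 : Set E))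

/-- The simple affine roots `α_0 = (−φ, 1)` and `α_i = (α_i, 0)` (`1 ≤ i ≤ r`), as pairs
`(gradient, constant term)`. -/
def asimple : Fin (D.r + 1) → E × ℝ :=
  Fin.cases (-D.hroot, (1 : ℝ)) fun i => (D.simple i, (0 : ℝ))

/-- The simple reflections `s_0, …, s_r` of the affine Weyl group. -/
def sgen (j : Fin (D.r + 1)) : E ≃ᵃ[ℝ] E := aRefl (D.asimple j).1 (D.asimple j).2

/-- `a = (α, c)` is an affine root iff `α ∈ Φ0` and `c ∈ ℤ`. -/
def IsAffRoot (a : E × ℝ) : Prop := a.1 ∈ D.Φ0 ∧ ∃ n : ℤ, a.2 = (n : ℝ)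

/-- `a` is a positive affine root. -/
def IsPosAff (a : E × ℝ) : Prop :=
  D.IsAffRoot a ∧ (0 < a.2 ∨ (a.2 = 0 ∧ a.1 ∈ D.pos))

/-- The set of reflections `s_α`, `α ∈ Φ0`. -/
def reflSet : Set (E ≃ᵃ[ℝ] E) := {g | ∃ α ∈ D.Φ0, g = aRefl α 0}

/-- The set of translations `τ(μ)`, `μ ∈ Q∨`. -/
def trSet : Set (E ≃ᵃ[ℝ] E) := {g | ∃ μ ∈ D.Qv, g = tr μ}

/-- The finite Weyl group `W0`, generated by the reflections `s_α`. -/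
def W0 : Subgroup (E ≃ᵃ[ℝ] E) := Subgroup.closure D.reflSet

/-- The affine Weyl group `W = W0 ⋉ Q∨`. -/
def W : Subgroup (E ≃ᵃ[ℝ] E) := Subgroup.closure (D.reflSet ∪ D.trSet)

/-- The inversion set `Π(w) = Φ+ ∩ w⁻¹Φ−`. -/
def PiSet (w : E ≃ᵃ[ℝ] E) : Set (E × ℝ) :=
  {a | D.IsPosAff a ∧ ¬D.IsPosAff (wact w a)}

/-- The length function `ℓ(w) := #Π(w)`. -/
def len (w : E ≃ᵃ[ℝ] E) : ℕ := (D.PiSet w).ncard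

/-- The open fundamental alcove `C₊`. -/
def Cp : Set E := {y | ∀ α ∈ D.pos, 0 < ⟪α, y⟫_ℝ ∧ ⟪α, y⟫_ℝ < 1}

/-- The closed fundamental alcove `C̄₊`. -/
def Cbar : Set E := closure D.Cp

/-- The face `C^J` of `C̄₊` (for `J ⊊ {0,…,r}`). -/
def CJ (J : Set (Fin (D.r + 1))) : Set E :=
  {c | c ∈ D.Cbar ∧ ∀ j, aval (D.asimple j) c = 0 ↔ j ∈ J}

/-- The orbit `O_c = W·c`. -/
def Orb (c : E) : Set E := {y | ∃ w ∈ D.W, w c = y}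

/-- The unique point `c_y ∈ C̄₊` in the `W`-orbit of `y`. -/
def cpt (y : E) : E :=
  if h : ∃ c, c ∈ D.Cbar ∧ ∃ w ∈ D.W, w c = y then h.choose else 0

/-- The unique shortest element `w_y ∈ W` with `w_y · c_y = y`. -/
def wmin (y : E) : E ≃ᵃ[ℝ] E :=
  if h : ∃ w, (w ∈ D.W ∧ w (D.cpt y) = y) ∧
      ∀ u, u ∈ D.W → u (D.cpt y) = y → D.len w ≤ D.len u then
    h.choose
  else 1

/-- Reflections of the Coxeter system `(W, {s_0, …, s_r})`. -/
def IsCoxRefl (g : E ≃ᵃ[ℝ] E) : Prop := ∃ w ∈ D.W, ∃ j, g = w * D.sgen j * w⁻¹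

/-- A single step in the Bruhat order. -/
def bstep (u v : E ≃ᵃ[ℝ] E) : Prop :=
  (∃ g, D.IsCoxRefl g ∧ v = g * u) ∧ D.len u < D.len v

/-- The Bruhat order `≤_B` of `(W, {s_0, …, s_r})`. -/
def bruhatLE : (E ≃ᵃ[ℝ] E) → (E ≃ᵃ[ℝ] E) → Prop := Relation.ReflTransGen D.bstep

/-- The strict Bruhat order `<_B`. -/
def bruhatLT (u v : E ≃ᵃ[ℝ] E) : Prop := D.bruhatLE u v ∧ u ≠ v

/-- The parabolic Bruhat order `≤` on `E`: `y ≤ z` iff `y ∈ W·z` and `w_y ≤_B w_z`. -/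
def paraLE (y z : E) : Prop :=
  (∃ w ∈ D.W, w z = y) ∧ D.bruhatLE (D.wmin y) (D.wmin z)

/-- The strict parabolic Bruhat order `<` on `E`. -/
def paraLT (y z : E) : Prop := D.paraLE y z ∧ y ≠ z

/-- The relation `≺`, the transitive closure of the `≺_α` (`α ∈ Φ0+`). -/
def prec : E → E → Prop :=
  Relation.TransGen fun y z => ∃ α ∈ D.pos, precA α y z

/-- The relation `⪯`. -/
def precLE (y z : E) : Prop := D.prec y z ∨ y = z

/-- The parabolic subgroup `W_J` of `W`. -/
def WJ (J : Set (Fin (D.r + 1))) : Subgroup (E ≃ᵃ[ℝ] E) :=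
  Subgroup.closure {g | ∃ j ∈ J, g = D.sgen j}

/-- The set `W^J` of minimal-length representatives of the cosets `W/W_J`. -/
def WminJ (J : Set (Fin (D.r + 1))) : Set (E ≃ᵃ[ℝ] E) :=
  {w | w ∈ D.W ∧ ∀ u ∈ D.WJ J, D.len w ≤ D.len (w * u)}

/-- Dominant elements: `α(μ) ≥ 0` for all `α ∈ Φ0+`. -/
def IsDom (μ : E) : Prop := ∀ α ∈ D.pos, 0 ≤ ⟪α, μ⟫_ℝ

/-- `Π0(v) = Φ0+ ∩ v⁻¹Φ0−` for `v ∈ W0`. -/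
def Pi0 (v : E ≃ᵃ[ℝ] E) : Finset E := D.pos.filter fun α => -(v.linear α) ∈ D.pos

/-- `χ = χ₊ − χ₋ : Φ0 → {±1}`. -/
def chi (α : E) : ℤ := if α ∈ D.pos then 1 else -1

end Data

/-- The character `𝔰_y : μ ↦ ∏_{α ∈ Φ0+} k_α^{η(α(y))·α(μ)}` (evaluated at points `μ` where
all `α(μ)` are integers, e.g. on a lattice `Λ ∈ 𝓛`). -/
def sweight {F : Type*} [Field F] (D : Data E) (k : E → Fˣ) (y μ : E) : Fˣ :=
  ∏ α ∈ D.pos, k α ^ (eta ⟪α, y⟫_ℝ * ⌊⟪α, μ⟫_ℝ⌋)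

/-- The action of `w ∈ W` on characters of `Q∨`: for `w = τ(ν)v`,
`(w·t)(μ) = q^{⟪ν,μ⟫}·t(v⁻¹μ)`. -/
def charAct {F : Type*} [Field F] (q : Fˣ) (w : E ≃ᵃ[ℝ] E) (t : E → Fˣ) : E → Fˣ :=
  fun μ => q ^ ⌊⟪w 0, μ⟫_ℝ⌋ * t (w.linear.symm μ)

/-- `t` defines a multiplicative character of `Q∨`, i.e. an element of `T = Hom(Q∨, Fˣ)`. -/
def IsChar {F : Type*} [Field F] (D : Data E) (t : E → Fˣ) : Prop :=
  ∀ μ ∈ D.Qv, ∀ ν ∈ D.Qv, t (μ + ν) = t μ * t ν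

/-- `q_α := q^{2/‖α‖²}`. -/
def qroot {F : Type*} [Field F] (q : Fˣ) (α : E) : Fˣ := q ^ ⌊2 / ⟪α, α⟫_ℝ⌋

/-- Membership in `T_J`: `t ∈ T` with `t^{α_i∨} = 1` for `i ∈ J ∩ {1,…,r}`, and
`q_φ·t^{−φ∨} = 1` if `0 ∈ J`. -/
def InTJ {F : Type*} [Field F] (D : Data E) (q : Fˣ) (J : Set (Fin (D.r + 1)))
    (t : E → Fˣ) : Prop :=
  IsChar D t ∧ (∀ i : Fin D.r, i.succ ∈ J → t (cv (D.simple i)) = 1) ∧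
    ((0 : Fin (D.r + 1)) ∈ J → qroot q D.hroot * t (-cv D.hroot) = 1)

/-- `κ_v(y) = ∏_{α ∈ Π0(v)} k_α^{−η(α(y))}`. -/
def kappa {F : Type*} [Field F] (D : Data E) (k : E → Fˣ) (v : E ≃ᵃ[ℝ] E) (y : E) : Fˣ :=
  ∏ α ∈ D.Pi0 v, k α ^ (-eta ⟪α, y⟫_ℝ)

/-- The (quasi-)monomial `x^y`, as an element of `⊕_{z ∈ E} F x^z`. -/
def xmono (F : Type*) [Field F] (y : E) : E →₀ F := Finsupp.single y 1

/-- The multiplication operator `π(x^μ) : x^y ↦ x^{y+μ}`. -/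
def xop (F : Type*) [Field F] (μ : E) : Module.End F (E →₀ F) :=
  Finsupp.lmapDomain F F (· + μ)

/-- The truncated divided difference `∇_i(x^y)` in its explicit form: with `n = ⌊α(y)⌋`,
`−(x^{y−α∨} + ⋯ + x^{y−nα∨})` if `n ≥ 1`, `0` if `n = 0`, and
`x^y + x^{y+α∨} + ⋯ + x^{y+(−n−1)α∨}` if `n ≤ −1`. -/
def nablaS (F : Type*) [Field F] (α y : E) : E →₀ F :=
  if 1 ≤ ⌊⟪α, y⟫_ℝ⌋ then
    -∑ s ∈ Finset.Icc (1 : ℤ) ⌊⟪α, y⟫_ℝ⌋, Finsupp.single (y - (s : ℝ) • cv α) (1 : F)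
  else
    ∑ s ∈ Finset.Icc (0 : ℤ) (-⌊⟪α, y⟫_ℝ⌋ - 1), Finsupp.single (y + (s : ℝ) • cv α) (1 : F)

/-- The truncated divided difference `∇_0(x^y)` in its explicit form: with `n = ⌊−φ(y)⌋`,
`−(q_φ^{−1}x^{y+φ∨} + ⋯ + q_φ^{−n}x^{y+nφ∨})` if `n ≥ 1`, `0` if `n = 0`, and
`x^y + q_φ x^{y−φ∨} + ⋯ + q_φ^{−n−1}x^{y+(n+1)φ∨}` if `n ≤ −1`. -/
def nabla0 {F : Type*} [Field F] (D : Data E) (q : Fˣ) (y : E) : E →₀ F :=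
  if 1 ≤ ⌊-⟪D.hroot, y⟫_ℝ⌋ then
    -∑ s ∈ Finset.Icc (1 : ℤ) ⌊-⟪D.hroot, y⟫_ℝ⌋,
      (((qroot q D.hroot : Fˣ) : F) ^ (-s)) • Finsupp.single (y + (s : ℝ) • cv D.hroot) (1 : F)
  else
    ∑ s ∈ Finset.Icc (0 : ℤ) (-⌊-⟪D.hroot, y⟫_ℝ⌋ - 1),
      (((qroot q D.hroot : Fˣ) : F) ^ s) • Finsupp.single (y - (s : ℝ) • cv D.hroot) (1 : F)

/-- `k_j := k_{α_j}` (`0 ≤ j ≤ r`), with `k_0 = k_φ`. -/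
def kgen {F : Type*} [Field F] (D : Data E) (k : E → Fˣ) : Fin (D.r + 1) → Fˣ :=
  Fin.cases (k D.hroot) fun i => k (D.simple i)

/-- The image of the monomial `x^y` under the truncated Demazure–Lusztig operator `π(T_j)`:
`π(T_i)x^y = k_i^{χ_ℤ(α_i(y))}x^{s_i y} + (k_i − k_i^{−1})∇_i(x^y)` for `1 ≤ i ≤ r`, and
`π(T_0)x^y = k_0^{χ_ℤ(α_0(y))}𝔱_y^{φ∨}x^{s_φ y} + (k_0 − k_0^{−1})∇_0(x^y)`. -/
def Tfun {F : Type*} [Field F] (D : Data E) (q : Fˣ) (k t : E → Fˣ) :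
    Fin (D.r + 1) → E → E →₀ F :=
  Fin.cases
    (fun y =>
      ((if ∃ n : ℤ, aval (D.asimple 0) y = (n : ℝ) then ((k D.hroot : Fˣ) : F) else 1) *
          ((charAct q (D.wmin y) t (cv D.hroot) : Fˣ) : F)) •
          Finsupp.single (aRefl D.hroot 0 y) (1 : F) +
        (((k D.hroot : Fˣ) : F) - (((k D.hroot)⁻¹ : Fˣ) : F)) • nabla0 D q y)
    fun i y =>
      (if ∃ n : ℤ, ⟪D.simple i, y⟫_ℝ = (n : ℝ) then ((k (D.simple i) : Fˣ) : F) else 1) •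
          Finsupp.single (aRefl (D.simple i) 0 y) (1 : F) +
        (((k (D.simple i) : Fˣ) : F) - (((k (D.simple i))⁻¹ : Fˣ) : F)) • nablaS F (D.simple i) y

/-- The truncated Demazure–Lusztig operator `π(T_j)` on `⊕_{y ∈ E} F x^y`. -/
def Top {F : Type*} [Field F] (D : Data E) (q : Fˣ) (k t : E → Fˣ) (j : Fin (D.r + 1)) :
    Module.End F (E →₀ F) :=
  Finsupp.linearCombination F (Tfun D q k t j)

/-- `π(((1 − x^{−α(μ)α∨})/(1 − x^{α∨}))·x^μ)` applied to `x^y`: the finite geometric sum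
appearing in the cross relation for `T_i`. -/
def crossS (F : Type*) [Field F] (α μ y : E) : E →₀ F :=
  if 1 ≤ ⌊⟪α, μ⟫_ℝ⌋ then
    -∑ s ∈ Finset.Icc (1 : ℤ) ⌊⟪α, μ⟫_ℝ⌋, Finsupp.single (y + μ - (s : ℝ) • cv α) (1 : F)
  else
    ∑ s ∈ Finset.Icc (0 : ℤ) (-⌊⟪α, μ⟫_ℝ⌋ - 1), Finsupp.single (y + μ + (s : ℝ) • cv α) (1 : F)

/-- `π(((1 − (q_φ x^{−φ∨})^{φ(μ)})/(1 − q_φ x^{−φ∨}))·x^μ)` applied to `x^y`: the finite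
geometric sum appearing in the cross relation for `T_0`. -/
def cross0 {F : Type*} [Field F] (D : Data E) (q : Fˣ) (μ y : E) : E →₀ F :=
  if 0 ≤ ⌊⟪D.hroot, μ⟫_ℝ⌋ then
    ∑ s ∈ Finset.Icc (0 : ℤ) (⌊⟪D.hroot, μ⟫_ℝ⌋ - 1),
      (((qroot q D.hroot : Fˣ) : F) ^ s) • Finsupp.single (y + μ - (s : ℝ) • cv D.hroot) (1 : F)
  else
    -∑ s ∈ Finset.Icc (1 : ℤ) (-⌊⟪D.hroot, μ⟫_ℝ⌋),
      (((qroot q D.hroot : Fˣ) : F) ^ (-s)) • Finsupp.single (y + μ + (s : ℝ) • cv D.hroot) (1 : F)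

/-- The quasi-monomial `x^y` in the model `Q^{(c)} ⊆ (E → Q)` of `Q ⊗_P P^{(c)}`:
`x^y` is the function `z ↦ x^{y−z}` supported on `y + Q∨`. -/
def xiQ {Q : Type*} [Field Q] (D : Data E) (mono : E → Q) (y : E) : E → Q :=
  fun z => if z - y ∈ D.Qv then mono (y - z) else 0

/-- Membership in the model `Q^{(c)} ⊆ (E → Q)` of `Q ⊗_P P^{(c)}`: functions supported on
`O_c` satisfying the covariance `ξ(z + ν) = x^{−ν}·ξ(z)` (`ν ∈ Q∨`). -/
def IsQc {Q : Type*} [Field Q] (D : Data E) (mono : E → Q) (c : E) (ξ : E → Q) : Prop :=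
  (∀ z, z ∉ D.Orb c → ξ z = 0) ∧
    ∀ z ∈ D.Orb c, ∀ ν ∈ D.Qv, ξ (z + ν) = (mono ν)⁻¹ * ξ z

/-- `x^{α_0∨} = q_φ x^{−φ∨}` as an element of `Q`. -/
def xroot0 {F Q : Type*} [Field F] [Field Q] (D : Data E) (ι : F →+* Q) (q : Fˣ)
    (mono : E → Q) : Q :=
  ι ((qroot q D.hroot : Fˣ) : F) * mono (-cv D.hroot)

/-- The right-hand side of the defining formula for `σ(s_j)(x^y)`:
`(k_j^{χ_ℤ(α_j(y))}(x^{α_j∨} − 1)/(k_j x^{α_j∨} − k_j^{−1}))·s_{j,𝔱}x^y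
 + ((k_j − k_j^{−1})/(k_j x^{α_j∨} − k_j^{−1}))·x^{y − ⌊Dα_j(y)⌋α_j∨}`. -/
def sigmaFormula {F Q : Type*} [Field F] [Field Q] (D : Data E) (ι : F →+* Q) (q : Fˣ)
    (k t : E → Fˣ) (mono : E → Q) : Fin (D.r + 1) → E → E → Q :=
  Fin.cases
    (fun y =>
      (((if ∃ n : ℤ, aval (D.asimple 0) y = (n : ℝ) then ι ((k D.hroot : Fˣ) : F) else 1) *
            (xroot0 D ι q mono - 1)) /
          (ι ((k D.hroot : Fˣ) : F) * xroot0 D ι q mono - ι (((k D.hroot)⁻¹ : Fˣ) : F))) •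
          (ι ((charAct q (D.wmin y) t (cv D.hroot) : Fˣ) : F) •
            xiQ D mono (aRefl D.hroot 0 y)) +
        ((ι ((k D.hroot : Fˣ) : F) - ι (((k D.hroot)⁻¹ : Fˣ) : F)) /
          (ι ((k D.hroot : Fˣ) : F) * xroot0 D ι q mono - ι (((k D.hroot)⁻¹ : Fˣ) : F))) •
          (ι (((qroot q D.hroot ^ (-⌊-⟪D.hroot, y⟫_ℝ⌋) : Fˣ) : F)) •
            xiQ D mono (y + (⌊-⟪D.hroot, y⟫_ℝ⌋ : ℝ) • cv D.hroot)))
    fun i y =>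
      (((if ∃ n : ℤ, ⟪D.simple i, y⟫_ℝ = (n : ℝ) then ι ((k (D.simple i) : Fˣ) : F) else 1) *
            (mono (cv (D.simple i)) - 1)) /
          (ι ((k (D.simple i) : Fˣ) : F) * mono (cv (D.simple i)) -
            ι (((k (D.simple i))⁻¹ : Fˣ) : F))) •
          xiQ D mono (aRefl (D.simple i) 0 y) +
        ((ι ((k (D.simple i) : Fˣ) : F) - ι (((k (D.simple i))⁻¹ : Fˣ) : F)) /
          (ι ((k (D.simple i) : Fˣ) : F) * mono (cv (D.simple i)) -
            ι (((k (D.simple i))⁻¹ : Fˣ) : F))) •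
          xiQ D mono (y - (⌊⟪D.simple i, y⟫_ℝ⌋ : ℝ) • cv (D.simple i))

end SSV

namespace SSV

section Aux

variable {E : Type*} [NormedAddCommGroup E] [InnerProductSpace ℝ E]

lemma rootForm_apply (α y : E) : rootForm α y = 2 / ⟪α, α⟫_ℝ * ⟪α, y⟫_ℝ := rfl

lemma inner_cv_left (α y : E) : ⟪cv α, y⟫_ℝ = 2 / ⟪α, α⟫_ℝ * ⟪α, y⟫_ℝ := by
  simp [cv, real_inner_smul_left]

lemma inner_cv_right (α y : E) : ⟪y, cv α⟫_ℝ = 2 / ⟪α, α⟫_ℝ * ⟪α, y⟫_ℝ := by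
  rw [real_inner_comm (cv α) y, inner_cv_left]

lemma cv_neg (α : E) : cv (-α) = -cv α := by
  simp [cv]

lemma smul_cv {α : E} (h : ⟪α, α⟫_ℝ ≠ 0) : (⟪α, α⟫_ℝ / 2) • cv α = α := by
  rw [cv, smul_smul, show ⟪α, α⟫_ℝ / 2 * (2 / ⟪α, α⟫_ℝ) = 1 by field_simp, one_smul]

lemma inner_self_cv {α : E} (h : ⟪α, α⟫_ℝ ≠ 0) : ⟪α, cv α⟫_ℝ = 2 := by
  rw [real_inner_comm, inner_cv_left]
  field_simp

/-- The reflection `s_β` as a linear map. -/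
def srl (β : E) : E →ₗ[ℝ] E := LinearMap.id - (rootForm β).smulRight β

lemma srl_apply (β y : E) : srl β y = y - (2 / ⟪β, β⟫_ℝ * ⟪β, y⟫_ℝ) • β := rfl

lemma aRefl_zero_apply {β : E} (h : ⟪β, β⟫_ℝ ≠ 0) (y : E) :
    aRefl β 0 y = srl β y := by
  simp only [aRefl, lrefl, dif_neg h, AffineEquiv.trans_apply,
    LinearEquiv.coe_toAffineEquiv, AffineEquiv.constVAdd_apply, Module.reflection_apply,
    srl_apply, rootForm_apply, zero_smul, neg_zero, zero_vadd]

lemma inner_srl_left (β x y : E) : ⟪srl β x, y⟫_ℝ = ⟪x, srl β y⟫_ℝ := by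
  simp only [srl_apply, inner_sub_left, inner_sub_right, real_inner_smul_left,
    real_inner_smul_right]
  rw [real_inner_comm x β]
  ring

lemma srl_srl {β : E} (h : ⟪β, β⟫_ℝ ≠ 0) (y : E) : srl β (srl β y) = y := by
  simp only [srl_apply, inner_sub_right, real_inner_smul_right]
  rw [show 2 / ⟪β, β⟫_ℝ * (⟪β, y⟫_ℝ - 2 / ⟪β, β⟫_ℝ * ⟪β, y⟫_ℝ * ⟪β, β⟫_ℝ)
      = -(2 / ⟪β, β⟫_ℝ * ⟪β, y⟫_ℝ) by field_simp; ring]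
  module

lemma inner_srl_srl {β : E} (h : ⟪β, β⟫_ℝ ≠ 0) (x y : E) :
    ⟪srl β x, srl β y⟫_ℝ = ⟪x, y⟫_ℝ := by
  rw [inner_srl_left, srl_srl h]

lemma cv_srl {β : E} (h : ⟪β, β⟫_ℝ ≠ 0) (γ : E) : cv (srl β γ) = srl β (cv γ) := by
  rw [cv, cv, inner_srl_srl h, ← map_smul]

lemma srl_cv_self {β : E} (h : ⟪β, β⟫_ℝ ≠ 0) : srl β (cv β) = -cv β := by
  rw [srl_apply, inner_self_cv h, cv]
  match_scalars
  ring

variable (D : Data E)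

lemma root_inner_self_ne {α : E} (hα : α ∈ D.Φ0) : ⟪α, α⟫_ℝ ≠ 0 := fun h =>
  D.root_ne_zero α hα (inner_self_eq_zero.mp h)

lemma root_inner_self_pos {α : E} (hα : α ∈ D.Φ0) : 0 < ⟪α, α⟫_ℝ :=
  lt_of_le_of_ne real_inner_self_nonneg (Ne.symm (root_inner_self_ne D hα))

lemma srl_mem {β γ : E} (hβ : β ∈ D.Φ0) (hγ : γ ∈ D.Φ0) : srl β γ ∈ D.Φ0 := by
  have h := D.root_refl_mem β hβ γ hγ
  rwa [aRefl_zero_apply (root_inner_self_ne D hβ)] at h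

/-- The operator `F : y ↦ ∑_{α ∈ Φ0+} α(y)·α∨`. -/
def Fop (D : Data E) : E →ₗ[ℝ] E := ∑ α ∈ D.pos, (rootForm α).smulRight α

lemma Fop_apply (y : E) : Fop D y = ∑ α ∈ D.pos, ⟪α, y⟫_ℝ • cv α := by
  simp only [Fop, LinearMap.sum_apply, LinearMap.smulRight_apply, rootForm_apply]
  refine Finset.sum_congr rfl fun α _ => ?_
  rw [cv, smul_smul, mul_comm]

lemma Fop_symm (y z : E) : ⟪Fop D y, z⟫_ℝ = ⟪y, Fop D z⟫_ℝ := by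
  rw [Fop_apply, Fop_apply, sum_inner, inner_sum]
  refine Finset.sum_congr rfl fun α _ => ?_
  rw [real_inner_smul_left, real_inner_smul_right, inner_cv_left, inner_cv_right]
  ring

lemma Φ0_eq_union : D.Φ0 = D.pos ∪ D.pos.image (fun α => -α) := by
  ext α
  simp only [Finset.mem_union, Finset.mem_image]
  constructor
  · intro hα
    rcases D.pos_dichotomy α hα with h | h
    · exact Or.inl h.1
    · exact Or.inr ⟨-α, h.2, neg_neg α⟩
  · rintro (h | ⟨γ, hγ, rfl⟩)
    · exact D.pos_subset h
    · exact D.root_neg_mem γ (D.pos_subset hγ)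

lemma pos_disj : Disjoint D.pos (D.pos.image (fun α => -α)) := by
  rw [Finset.disjoint_left]
  rintro α hα hmem
  rw [Finset.mem_image] at hmem
  obtain ⟨γ, hγ, rfl⟩ := hmem
  rcases D.pos_dichotomy γ (D.pos_subset hγ) with h | h
  · exact h.2 hα
  · exact h.1 hγ

lemma card_Φ0 : D.Φ0.card = 2 * D.pos.card := by
  rw [Φ0_eq_union D, Finset.card_union_of_disjoint (pos_disj D),
    Finset.card_image_of_injective _ neg_injective, two_mul]

lemma sum_Φ0_eq (y : E) : ∑ α ∈ D.Φ0, ⟪α, y⟫_ℝ • cv α = (2 : ℝ) • Fop D y := by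
  rw [Φ0_eq_union D, Finset.sum_union (pos_disj D), Fop_apply, two_smul]
  congr 1
  rw [Finset.sum_image (fun a _ b _ h => neg_injective h)]
  refine Finset.sum_congr rfl fun α _ => ?_
  rw [cv_neg, inner_neg_left, neg_smul_neg]

lemma sum_comm_srl {β : E} (hβ : β ∈ D.Φ0) (y : E) :
    ∑ α ∈ D.Φ0, ⟪α, srl β y⟫_ℝ • cv α = srl β (∑ α ∈ D.Φ0, ⟪α, y⟫_ℝ • cv α) := by
  have hb := root_inner_self_ne D hβ
  rw [map_sum]
  refine Finset.sum_nbij' (fun α => srl β α) (fun α => srl β α) ?_ ?_ ?_ ?_ ?_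
  · intro α hα; exact srl_mem D hβ hα
  · intro α hα; exact srl_mem D hβ hα
  · intro α _; exact srl_srl hb α
  · intro α _; exact srl_srl hb α
  · intro α _
    rw [map_smul, ← cv_srl hb, srl_srl hb, inner_srl_left]

lemma Fop_comm {β : E} (hβ : β ∈ D.Φ0) (y : E) :
    Fop D (srl β y) = srl β (Fop D y) := by
  have h2 : (2 : ℝ) • Fop D (srl β y) = (2 : ℝ) • srl β (Fop D y) := by
    rw [← sum_Φ0_eq, ← map_smul, ← sum_Φ0_eq, sum_comm_srl D hβ]
  exact smul_right_injective E two_ne_zero h2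

/-- The eigenvalue of `F` on the coroot `β∨`. -/
def ev (D : Data E) (β : E) : ℝ := ⟪β, Fop D (cv β)⟫_ℝ / 2

lemma Fop_cv {β : E} (hβ : β ∈ D.Φ0) : Fop D (cv β) = ev D β • cv β := by
  have h := root_inner_self_ne D hβ
  have h1 : srl β (Fop D (cv β)) = -Fop D (cv β) := by
    rw [← Fop_comm D hβ, srl_cv_self h, map_neg]
  set v := Fop D (cv β) with hv
  rw [srl_apply] at h1
  have h3 := sub_eq_iff_eq_add.mp h1
  have h2 : (2 : ℝ) • v = (2 / ⟪β, β⟫_ℝ * ⟪β, v⟫_ℝ) • β := by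
    rw [two_smul]
    nth_rewrite 1 [h3]
    abel
  have h4 : (2 : ℝ) • v = (2 : ℝ) • (ev D β • cv β) := by
    simp only [ev, ← hv]
    rw [h2, cv]
    match_scalars
    ring
  exact smul_right_injective E two_ne_zero h4

lemma inner_cv_cv (β γ : E) :
    ⟪cv β, cv γ⟫_ℝ = 2 / ⟪β, β⟫_ℝ * (2 / ⟪γ, γ⟫_ℝ * ⟪β, γ⟫_ℝ) := by
  rw [inner_cv_left, inner_cv_right, real_inner_comm β γ]

lemma ev_eq_of_not_orth {β γ : E} (hβ : β ∈ D.Φ0) (hγ : γ ∈ D.Φ0)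
    (h : ⟪β, γ⟫_ℝ ≠ 0) : ev D β = ev D γ := by
  have h1 := Fop_symm D (cv β) (cv γ)
  rw [Fop_cv D hβ, Fop_cv D hγ, real_inner_smul_left, real_inner_smul_right] at h1
  have hc : ⟪cv β, cv γ⟫_ℝ ≠ 0 := by
    rw [inner_cv_cv]
    have hb := root_inner_self_ne D hβ
    have hg := root_inner_self_ne D hγ
    positivity
  exact mul_right_cancel₀ hc h1

lemma ev_const {β γ : E} (hβ : β ∈ D.Φ0) (hγ : γ ∈ D.Φ0) : ev D β = ev D γ := by
  by_contra hne
  refine D.root_irred {a | a ∈ D.Φ0 ∧ ev D a = ev D β} {a | a ∈ D.Φ0 ∧ ev D a ≠ ev D β}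
    ?_ ⟨β, hβ, rfl⟩ ⟨γ, hγ, fun h => hne h.symm⟩ ?_
  · ext a
    simp only [Set.mem_union, Set.mem_setOf_eq, Finset.mem_coe]
    tauto
  · rintro a ⟨ha, hae⟩ b ⟨hb, hbe⟩
    by_contra hab
    exact hbe ((ev_eq_of_not_orth D hb ha fun h => hab
      (by rw [real_inner_comm]; exact h)).trans hae)

/-- The span of the coroots. -/
abbrev Sp (D : Data E) : Submodule ℝ E := Submodule.span ℝ (cv '' (D.Φ0 : Set E))

lemma cv_mem_Sp {α : E} (hα : α ∈ D.Φ0) : cv α ∈ Sp D :=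
  Submodule.subset_span ⟨α, hα, rfl⟩

lemma root0_mem : D.simple ⟨0, D.r_pos⟩ ∈ D.Φ0 := D.pos_subset (D.simple_mem_pos _)

/-- The common eigenvalue (the Coxeter number). -/
def evc (D : Data E) : ℝ := ev D (D.simple ⟨0, D.r_pos⟩)

lemma Fop_on_Sp {y : E} (hy : y ∈ Sp D) : Fop D y = evc D • y := by
  induction hy using Submodule.span_induction with
  | mem x hx =>
      obtain ⟨α, hα, rfl⟩ := hx
      rw [Fop_cv D hα, ev_const D hα (root0_mem D)]
      rfl
  | zero => simp
  | add x y _ _ hx hy => rw [map_add, hx, hy, smul_add]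
  | smul c x _ hx => rw [map_smul, hx, smul_comm]

lemma Fop_on_orth {y : E} (hy : y ∈ (Sp D)ᗮ) : Fop D y = 0 := by
  rw [Fop_apply]
  refine Finset.sum_eq_zero fun α hα => ?_
  have hmem := D.pos_subset hα
  have ht := root_inner_self_ne D hmem
  have h0 : ⟪cv α, y⟫_ℝ = 0 :=
    (Submodule.mem_orthogonal _ _).mp hy (cv α) (cv_mem_Sp D hmem)
  rw [inner_cv_left] at h0
  have h2t : 2 / ⟪α, α⟫_ℝ ≠ 0 := div_ne_zero two_ne_zero ht
  rcases mul_eq_zero.mp h0 with h | h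
  · exact absurd h h2t
  · rw [h, zero_smul]

end Aux

section AuxFin

variable {E : Type*} [NormedAddCommGroup E] [InnerProductSpace ℝ E] [FiniteDimensional ℝ E]
variable (D : Data E)

lemma Fop_eq_proj (y : E) :
    Fop D y = evc D • ((Submodule.orthogonalProjectionOnto (Sp D) y : E)) := by
  have hdec : y = ↑(Submodule.orthogonalProjectionOnto (Sp D) y) + (y - ↑(Submodule.orthogonalProjectionOnto (Sp D) y)) := by
    abel
  nth_rewrite 1 [hdec]
  rw [map_add, Fop_on_Sp D (SetLike.coe_mem _),
    Fop_on_orth D (show y - ((Submodule.orthogonalProjectionOnto (Sp D) y : E)) ∈ (Sp D)ᗮ from (Sp D).sub_starProjection_mem_orthogonal y), add_zero]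

lemma trace_smulRight' (f : E →ₗ[ℝ] ℝ) (x : E) :
    LinearMap.trace ℝ E (f.smulRight x) = f x := by
  have h : f.smulRight x = dualTensorHom ℝ E E (f ⊗ₜ x) := by
    ext y; simp
  rw [h, LinearMap.trace_eq_contract_apply, contractLeft_apply]

lemma trace_Fop : LinearMap.trace ℝ E (Fop D) = 2 * D.pos.card := by
  rw [Fop, map_sum, Finset.sum_congr rfl fun α _ => trace_smulRight' (rootForm α) α]
  have h : ∀ α ∈ D.pos, rootForm α α = 2 := by
    intro α hα
    have ht := root_inner_self_ne D (D.pos_subset hα)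
    rw [rootForm_apply]
    field_simp
  rw [Finset.sum_congr rfl h, Finset.sum_const, nsmul_eq_mul, mul_comm]

lemma root_mem_span_simple {α : E} (hα : α ∈ D.Φ0) :
    α ∈ Submodule.span ℝ (Set.range D.simple) := by
  have hpos : ∀ β ∈ D.pos, β ∈ Submodule.span ℝ (Set.range D.simple) := by
    intro β hβ
    obtain ⟨n, hn⟩ := D.pos_nat_comb β hβ
    rw [hn]
    exact Submodule.sum_mem _ fun i _ =>
      Submodule.smul_mem _ _ (Submodule.subset_span ⟨i, rfl⟩)
  rcases D.pos_dichotomy α hα with h | h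
  · exact hpos α h.1
  · simpa using Submodule.neg_mem _ (hpos (-α) h.2)

lemma Sp_eq_span_simple : Sp D = Submodule.span ℝ (Set.range D.simple) := by
  refine le_antisymm (Submodule.span_le.mpr ?_) (Submodule.span_le.mpr ?_)
  · rintro x ⟨α, hα, rfl⟩
    rw [cv]
    exact Submodule.smul_mem _ _ (root_mem_span_simple D hα)
  · rintro x ⟨i, rfl⟩
    rw [← smul_cv (root_inner_self_ne D (D.pos_subset (D.simple_mem_pos i)))]
    exact Submodule.smul_mem _ _ (cv_mem_Sp D (D.pos_subset (D.simple_mem_pos i)))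

lemma finrank_Sp : Module.finrank ℝ (Sp D) = D.r := by
  rw [Sp_eq_span_simple D, finrank_span_eq_card D.simple_indep, Fintype.card_fin]

lemma trace_proj :
    LinearMap.trace ℝ E ((Sp D).subtype ∘ₗ (Submodule.orthogonalProjectionOnto (Sp D)).toLinearMap)
      = (D.r : ℝ) := by
  rw [LinearMap.trace_comp_comm']
  have h : (Submodule.orthogonalProjectionOnto (Sp D)).toLinearMap ∘ₗ (Sp D).subtype = LinearMap.id := by
    ext x
    simp
  rw [h, LinearMap.trace_id, finrank_Sp D]

lemma evc_mul_r : evc D * D.r = (D.Φ0.card : ℝ) := by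
  have hF : Fop D = evc D •
      ((Sp D).subtype ∘ₗ (Submodule.orthogonalProjectionOnto (Sp D)).toLinearMap) := by
    ext y
    exact Fop_eq_proj D y
  have h1 : LinearMap.trace ℝ E (Fop D) = evc D * D.r := by
    rw [hF, map_smul, trace_proj D, smul_eq_mul]
  rw [← h1, trace_Fop D, card_Φ0 D]
  push_cast
  ring

lemma r_ne_zero : (D.r : ℝ) ≠ 0 := Nat.cast_ne_zero.mpr D.r_pos.ne'

lemma evc_eq : evc D = (D.Φ0.card : ℝ) / D.r := by
  rw [eq_div_iff (r_ne_zero D)]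
  exact evc_mul_r D

lemma card_Φ0_pos : 0 < D.Φ0.card :=
  Finset.card_pos.mpr ⟨D.simple ⟨0, D.r_pos⟩, root0_mem D⟩

lemma pair_int {β γ : E} (hβ : β ∈ D.Φ0) (hγ : γ ∈ D.Φ0) :
    ∃ n : ℤ, ⟪γ, cv β⟫_ℝ = n := by
  obtain ⟨n, hn⟩ := D.root_crystal γ hγ β hβ
  exact ⟨n, by rw [real_inner_comm]; exact hn⟩

lemma sum_int {s : Finset E} {f : E → ℝ} (h : ∀ a ∈ s, ∃ n : ℤ, f a = n) :
    ∃ n : ℤ, ∑ a ∈ s, f a = n := by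
  classical
  induction s using Finset.induction_on with
  | empty => exact ⟨0, by simp⟩
  | @insert a s ha ih =>
      obtain ⟨n, hn⟩ := h a (Finset.mem_insert_self a s)
      obtain ⟨m, hm⟩ := ih fun b hb => h b (Finset.mem_insert_of_mem hb)
      exact ⟨n + m, by rw [Finset.sum_insert ha, hn, hm]; push_cast; ring⟩

lemma evc_mul_int {β γ : E} (hβ : β ∈ D.Φ0) (hγ : γ ∈ D.Φ0) :
    ∃ N : ℤ, evc D * ⟪γ, cv β⟫_ℝ = N := by
  have h1 : evc D * ⟪γ, cv β⟫_ℝ = ⟪γ, Fop D (cv β)⟫_ℝ := by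
    rw [Fop_cv D hβ, ev_const D hβ (root0_mem D), real_inner_smul_right]
    rfl
  rw [h1, Fop_apply, inner_sum]
  refine sum_int fun α hα => ?_
  rw [real_inner_smul_right]
  obtain ⟨n, hn⟩ := pair_int D hβ (D.pos_subset hα)
  obtain ⟨m, hm⟩ := pair_int D (D.pos_subset hα) hγ
  exact ⟨n * m, by rw [hn, hm]; push_cast; ring⟩

lemma exists_pair (hr : 2 ≤ D.r) :
    ∃ β ∈ D.Φ0, ∃ γ ∈ D.Φ0, ⟪β, γ⟫_ℝ ≠ 0 ∧ γ ≠ β ∧ γ ≠ -β := by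
  set β := D.simple ⟨0, D.r_pos⟩ with hβdef
  have hβ : β ∈ D.Φ0 := root0_mem D
  have hB : ((D.Φ0 : Set E) \ {β, -β}).Nonempty := by
    by_contra hBe
    rw [Set.not_nonempty_iff_eq_empty, Set.diff_eq_empty] at hBe
    have hle : Sp D ≤ Submodule.span ℝ {β} := by
      rw [Submodule.span_le]
      rintro x ⟨α, hα, rfl⟩
      have hmem : α = β ∨ α = -β := by simpa using hBe hα
      rcases hmem with rfl | rfl
      · rw [cv]
        exact Submodule.smul_mem _ _ (Submodule.mem_span_singleton_self β)
      · rw [cv_neg]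
        exact Submodule.neg_mem _
          (by rw [cv]; exact Submodule.smul_mem _ _ (Submodule.mem_span_singleton_self β))
    have h1 : Module.finrank ℝ (Sp D) ≤ Module.finrank ℝ (Submodule.span ℝ {β}) :=
      Submodule.finrank_mono hle
    rw [finrank_Sp D, finrank_span_singleton (D.root_ne_zero β hβ)] at h1
    omega
  by_contra hcon
  push_neg at hcon
  refine D.root_irred ((D.Φ0 : Set E) ∩ {β, -β}) ((D.Φ0 : Set E) \ {β, -β})
    (Set.inter_union_diff _ _).symm ⟨β, hβ, Or.inl rfl⟩ hB ?_
  rintro a ⟨ha, hab⟩ b ⟨hb, hnb⟩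
  simp only [Set.mem_insert_iff, Set.mem_singleton_iff] at hab
  simp only [Set.mem_insert_iff, Set.mem_singleton_iff, not_or] at hnb
  by_contra hne0
  rcases hab with rfl | rfl
  · exact hnb.2 (hcon β hβ b hb hne0 hnb.1)
  · have hne0' : ⟪β, b⟫_ℝ ≠ 0 := fun h => hne0 (by rw [inner_neg_left, h, neg_zero])
    exact hnb.2 (hcon β hβ b hb hne0' hnb.1)

lemma evc_int : ∃ q : ℤ, evc D = q := by
  rcases lt_or_ge D.r 2 with hr | hr
  · refine ⟨D.Φ0.card, ?_⟩
    have h := evc_mul_r D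
    have hr1 : D.r = 1 := by have := D.r_pos; omega
    rw [hr1] at h
    simp only [Nat.cast_one, mul_one] at h
    exact_mod_cast h
  · obtain ⟨β, hβ, γ, hγ, hne, hne1, hne2⟩ := exists_pair D hr
    obtain ⟨n, hn⟩ := pair_int D hβ hγ
    obtain ⟨m, hm⟩ := pair_int D hγ hβ
    obtain ⟨N, hN⟩ := evc_mul_int D hβ hγ
    obtain ⟨M, hM⟩ := evc_mul_int D hγ hβ
    have tβ : 0 < ⟪β, β⟫_ℝ := root_inner_self_pos D hβ
    have tγ : 0 < ⟪γ, γ⟫_ℝ := root_inner_self_pos D hγ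
    have tβ' : ⟪β, β⟫_ℝ ≠ 0 := ne_of_gt tβ
    have tγ' : ⟪γ, γ⟫_ℝ ≠ 0 := ne_of_gt tγ
    have hβ0 : β ≠ 0 := D.root_ne_zero β hβ
    have hnormβ : ‖β‖ ≠ 0 := norm_ne_zero_iff.mpr hβ0
    have hprop : ∀ c : ℝ, γ ≠ c • β := by
      intro c hc
      have hcΦ : c • β ∈ D.Φ0 := hc ▸ hγ
      rcases D.root_reduced β hβ c hcΦ with h1 | h1
      · exact hne1 (by rw [hc, h1, one_smul])
      · exact hne2 (by rw [hc, h1, neg_one_smul])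
    have h1 : ⟪β, γ⟫_ℝ < ‖β‖ * ‖γ‖ := by
      rw [inner_lt_norm_mul_iff_real]
      intro h
      apply hprop (‖γ‖ / ‖β‖)
      refine smul_right_injective E hnormβ ?_
      show ‖β‖ • γ = ‖β‖ • ((‖γ‖ / ‖β‖) • β)
      rw [smul_smul, show ‖β‖ * (‖γ‖ / ‖β‖) = ‖γ‖ by field_simp]
      exact h.symm
    have h1' : -⟪β, γ⟫_ℝ < ‖β‖ * ‖γ‖ := by
      have hiff := @inner_lt_norm_mul_iff_real E _ _ (-β) γ
      rw [inner_neg_left, norm_neg] at hiff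
      rw [hiff]
      intro h
      apply hprop (-(‖γ‖ / ‖β‖))
      refine smul_right_injective E hnormβ ?_
      show ‖β‖ • γ = ‖β‖ • (-(‖γ‖ / ‖β‖) • β)
      rw [smul_smul, show ‖β‖ * -(‖γ‖ / ‖β‖) = -‖γ‖ by field_simp, ← h, smul_neg, neg_smul]
    have habs : ⟪β, γ⟫_ℝ ^ 2 < (‖β‖ * ‖γ‖) ^ 2 := sq_lt_sq' (by linarith) h1
    have hcs : ⟪β, γ⟫_ℝ ^ 2 < ⟪β, β⟫_ℝ * ⟪γ, γ⟫_ℝ := by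
      rw [real_inner_self_eq_norm_mul_norm, real_inner_self_eq_norm_mul_norm]
      nlinarith [habs]
    have hnm : (n : ℝ) * m = 4 * ⟪β, γ⟫_ℝ ^ 2 / (⟪β, β⟫_ℝ * ⟪γ, γ⟫_ℝ) := by
      rw [← hn, ← hm, inner_cv_right, inner_cv_right, real_inner_comm β γ]
      field_simp
      ring
    have hbg2 : 0 < ⟪β, γ⟫_ℝ ^ 2 := lt_of_le_of_ne (sq_nonneg _) (Ne.symm (pow_ne_zero 2 hne))
    have hpos' : 0 < (n : ℝ) * m := by
      rw [hnm]
      exact div_pos (by linarith) (mul_pos tβ tγ)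
    have hlt' : (n : ℝ) * m < 4 := by
      rw [hnm, div_lt_iff₀ (mul_pos tβ tγ)]
      nlinarith [hcs]
    have hi0 : (0 : ℤ) < n * m := by exact_mod_cast hpos'
    have hi4 : n * m < 4 := by exact_mod_cast hlt'
    have hone : n = 1 ∨ n = -1 ∨ m = 1 ∨ m = -1 := by
      by_contra hc2
      push_neg at hc2
      obtain ⟨a1, a2, a3, a4⟩ := hc2
      have hn0 : n ≠ 0 := by rintro rfl; simp at hi0
      have hm0 : m ≠ 0 := by rintro rfl; simp at hi0
      have h2n : 2 ≤ n.natAbs := by omega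
      have h2m : 2 ≤ m.natAbs := by omega
      have h4 : 4 ≤ (n * m).natAbs := by
        rw [Int.natAbs_mul]
        calc 4 = 2 * 2 := rfl
        _ ≤ n.natAbs * m.natAbs := Nat.mul_le_mul h2n h2m
      have h4' : (4 : ℤ) ≤ n * m := by
        calc (4 : ℤ) = ((4 : ℕ) : ℤ) := rfl
        _ ≤ ((n * m).natAbs : ℤ) := by exact_mod_cast h4
        _ = n * m := Int.natAbs_of_nonneg (le_of_lt hi0)
      exact absurd hi4 (not_lt.mpr h4')
    rcases hone with h | h | h | h
    · refine ⟨N, ?_⟩; rw [hn, h] at hN; push_cast at hN ⊢; linarith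
    · refine ⟨-N, ?_⟩; rw [hn, h] at hN; push_cast at hN ⊢; linarith
    · refine ⟨M, ?_⟩; rw [hm, h] at hM; push_cast at hM ⊢; linarith
    · refine ⟨-M, ?_⟩; rw [hm, h] at hM; push_cast at hM ⊢; linarith

end AuxFin

end SSV


/-- with `h = #Φ0/r` the Coxeter number and `E′` the span of the coroots,
`(1/h)·∑_{α ∈ Φ0+} α(y)·α∨ = pr_{E′}(y)` for all `y ∈ E`; in particular the coweight
lattice `P∨` satisfies `P∨ ⊆ (1/h)·Q∨`. -/
theorem statement7
    {E : Type*} [NormedAddCommGroup E] [InnerProductSpace ℝ E] [FiniteDimensional ℝ E]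
    (D : SSV.Data E) :
    (∀ y : E, (1 / ((D.Φ0.card : ℝ) / (D.r : ℝ))) • ∑ α ∈ D.pos, ⟪α, y⟫_ℝ • SSV.cv α =
      (Submodule.orthogonalProjectionOnto (Submodule.span ℝ (SSV.cv '' (D.Φ0 : Set E))) y : E)) ∧
    ∀ lam : E, lam ∈ Submodule.span ℝ (SSV.cv '' (D.Φ0 : Set E)) →
      (∀ α ∈ D.Φ0, ∃ n : ℤ, ⟪α, lam⟫_ℝ = (n : ℝ)) →
      (D.Φ0.card / D.r) • lam ∈ D.Qv := by
  constructor
  · intro y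
    have h : (1 / ((D.Φ0.card : ℝ) / (D.r : ℝ))) • ∑ α ∈ D.pos, ⟪α, y⟫_ℝ • SSV.cv α
        = ((Submodule.orthogonalProjectionOnto (SSV.Sp D) y : E)) := by
      have hc : (0 : ℝ) < (D.Φ0.card : ℝ) / (D.r : ℝ) :=
        div_pos (Nat.cast_pos.mpr (SSV.card_Φ0_pos D)) (Nat.cast_pos.mpr D.r_pos)
      rw [← SSV.Fop_apply D y, SSV.Fop_eq_proj D y, SSV.evc_eq D, smul_smul,
        one_div_mul_cancel (ne_of_gt hc), one_smul]
    exact h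
  · intro lam hlam hint
    obtain ⟨q, hq⟩ := SSV.evc_int D
    have hq0 : 0 ≤ q := by
      have h0 : (0 : ℝ) ≤ (q : ℝ) := by
        rw [← hq, SSV.evc_eq D]
        positivity
      exact_mod_cast h0
    have hcast2 : ((q.toNat : ℕ) : ℝ) = SSV.evc D := by
      rw [hq]
      exact_mod_cast Int.toNat_of_nonneg hq0
    have hk : q.toNat * D.r = D.Φ0.card := by
      have hcast : ((q.toNat * D.r : ℕ) : ℝ) = (D.Φ0.card : ℝ) := by
        push_cast
        rw [hcast2]
        exact SSV.evc_mul_r D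
      exact_mod_cast hcast
    have hdiv : D.Φ0.card / D.r = q.toNat := by
      rw [← hk, Nat.mul_div_cancel _ D.r_pos]
    rw [hdiv, ← Nat.cast_smul_eq_nsmul ℝ q.toNat lam, hcast2,
      ← SSV.Fop_on_Sp D hlam, SSV.Fop_apply]
    refine AddSubgroup.sum_mem _ fun α hα => ?_
    obtain ⟨nα, hnα⟩ := hint α (D.pos_subset hα)
    rw [hnα, Int.cast_smul_eq_zsmul]
    exact AddSubgroup.zsmul_mem _
      (AddSubgroup.subset_closure (Set.mem_image_of_mem _ (Finset.mem_coe.mpr (D.pos_subset hα)))) _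
end
end

section
/- Let w, w′ ∈ W with w ≤_B w′. Then w·c ⪯ w′·c for every c ∈ C̄+. -/
open scoped InnerProductSpace Classical

noncomputable section

namespace SSV

section Aux
variable {E : Type*} [NormedAddCommGroup E] [InnerProductSpace ℝ E]

-- group basics
lemma mul_apply' (u v : E ≃ᵃ[ℝ] E) (x : E) : (u * v) x = u (v x) := rfl
lemma one_apply' (x : E) : (1 : E ≃ᵃ[ℝ] E) x = x := rfl
lemma inv_apply_apply' (u : E ≃ᵃ[ℝ] E) (x : E) : u⁻¹ (u x) = x := by
  rw [← mul_apply', inv_mul_cancel, one_apply']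
lemma apply_inv_apply' (u : E ≃ᵃ[ℝ] E) (x : E) : u (u⁻¹ x) = x := by
  rw [← mul_apply', mul_inv_cancel, one_apply']
lemma apply_eq_lin (u : E ≃ᵃ[ℝ] E) (x : E) : u x = u.linear x + u 0 := by
  have := u.toAffineMap.map_vadd 0 x
  simpa [vadd_eq_add] using this
lemma lin_apply (u : E ≃ᵃ[ℝ] E) (x : E) : u.linear x = u x - u 0 := by
  rw [apply_eq_lin]; abel
lemma lin_mul (u v : E ≃ᵃ[ℝ] E) (x : E) : (u * v).linear x = u.linear (v.linear x) := by
  rw [lin_apply, mul_apply', mul_apply', lin_apply v, map_sub u.linear, lin_apply u, lin_apply u]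
  abel
lemma lin_one (x : E) : (1 : E ≃ᵃ[ℝ] E).linear x = x := by simp [lin_apply, one_apply']
lemma lin_inv_lin (u : E ≃ᵃ[ℝ] E) (x : E) : u⁻¹.linear (u.linear x) = x := by
  rw [← lin_mul, inv_mul_cancel, lin_one]
lemma lin_lin_inv (u : E ≃ᵃ[ℝ] E) (x : E) : u.linear (u⁻¹.linear x) = x := by
  rw [← lin_mul, mul_inv_cancel, lin_one]

lemma inner_self_ne (α : E) (hα : α ≠ 0) : ⟪α, α⟫_ℝ ≠ 0 := by
  simpa [inner_self_eq_zero] using hα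

lemma inner_cv_self (α : E) (hα : α ≠ 0) : ⟪α, cv α⟫_ℝ = 2 := by
  rw [cv, real_inner_smul_right]
  field_simp [inner_self_ne α hα]

lemma aRefl_apply (α : E) (hα : α ≠ 0) (c : ℝ) (y : E) :
    aRefl α c y = y - (⟪α, y⟫_ℝ + c) • cv α := by
  rw [aRefl, AffineEquiv.trans_apply, AffineEquiv.constVAdd_apply]
  rw [LinearEquiv.coe_toAffineEquiv, lrefl, dif_neg (inner_self_ne α hα),
    Module.reflection_apply]
  have h1 : (rootForm α) y • α = ⟪α, y⟫_ℝ • cv α := by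
    simp only [rootForm, LinearMap.coe_mk, AddHom.coe_mk, cv, smul_smul]
    ring_nf
  rw [h1, cv, vadd_eq_add, add_smul, smul_smul, smul_smul]
  module

lemma aRefl_apply' (α : E) (hα : α ≠ 0) (c : ℝ) (y : E) :
    aRefl α c y = y - aval (α, c) y • cv α := aRefl_apply α hα c y

lemma aRefl_invol (α : E) (hα : α ≠ 0) (c : ℝ) (y : E) :
    aRefl α c (aRefl α c y) = y := by
  rw [aRefl_apply α hα, aRefl_apply α hα, inner_sub_right, real_inner_smul_right,
    inner_cv_self α hα]
  module

lemma aRefl_sq (α : E) (hα : α ≠ 0) (c : ℝ) : aRefl α c * aRefl α c = 1 := by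
  ext y
  rw [mul_apply', aRefl_invol α hα]
  rfl

lemma aRefl_inv (α : E) (hα : α ≠ 0) (c : ℝ) : (aRefl α c)⁻¹ = aRefl α c :=
  inv_eq_of_mul_eq_one_right (aRefl_sq α hα c)

lemma aRefl_neg (α : E) (hα : α ≠ 0) (c : ℝ) : aRefl (-α) (-c) = aRefl α c := by
  have hα' : -α ≠ 0 := by simpa using hα
  ext y
  rw [aRefl_apply α hα, aRefl_apply (-α) hα', cv_neg, inner_neg_left]
  module

lemma aRefl_zero (α : E) (hα : α ≠ 0) (c : ℝ) : aRefl α c 0 = -(c • cv α) := by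
  rw [aRefl_apply α hα]; simp

lemma aRefl_lin (α : E) (hα : α ≠ 0) (c : ℝ) (x : E) :
    (aRefl α c).linear x = x - ⟪α, x⟫_ℝ • cv α := by
  rw [lin_apply, aRefl_apply α hα, aRefl_zero α hα]
  simp [add_smul]
  abel

lemma aval_ext {a b : E × ℝ} (h : ∀ y, aval a y = aval b y) : a = b := by
  have h2 : a.2 = b.2 := by simpa [aval] using h 0
  have h1 : a.1 = b.1 := by
    have hy := h (a.1 - b.1)
    rw [aval, aval, h2] at hy
    have hy' := add_right_cancel hy
    rw [← sub_eq_zero, ← inner_sub_left] at hy'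
    exact sub_eq_zero.1 ((inner_self_eq_zero (𝕜 := ℝ)).1 hy')
  exact Prod.ext h1 h2

lemma aval_wact_apply (w : E ≃ᵃ[ℝ] E)
    (hw : ∀ x y : E, ⟪w.linear x, w.linear y⟫_ℝ = ⟪x, y⟫_ℝ) (a : E × ℝ) (y : E) :
    aval (wact w a) y = aval a (w⁻¹ y) := by
  have hy : y = w.linear (w⁻¹ y) + w 0 := by rw [← apply_eq_lin, apply_inv_apply']
  rw [aval, wact]
  dsimp only
  conv_lhs => rw [hy]
  rw [inner_add_right, hw a.1 (w⁻¹ y)]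
  dsimp [aval]
  ring


lemma lrefl_orth (α : E) (hα : α ≠ 0) (c : ℝ) (x y : E) :
    ⟪(aRefl α c).linear x, (aRefl α c).linear y⟫_ℝ = ⟪x, y⟫_ℝ := by
  have hA := inner_self_ne α hα
  have h1 : ∀ z : E, ⟪z, cv α⟫_ℝ = 2 / ⟪α, α⟫_ℝ * ⟪α, z⟫_ℝ := fun z => by
    rw [real_inner_comm, cv, real_inner_smul_left]
  have h2 : ∀ z : E, ⟪cv α, z⟫_ℝ = 2 / ⟪α, α⟫_ℝ * ⟪α, z⟫_ℝ := fun z => by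
    rw [cv, real_inner_smul_left]
  rw [aRefl_lin α hα, aRefl_lin α hα]
  simp only [inner_sub_left, inner_sub_right, real_inner_smul_left, real_inner_smul_right,
    h1, h2]
  field_simp
  ring

end Aux

section DataAux

variable {E : Type*} [NormedAddCommGroup E] [InnerProductSpace ℝ E]

/-- The property of being an affine-Weyl-type transformation. -/
structure IsW (D : Data E) (w : E ≃ᵃ[ℝ] E) : Prop where
  inn : ∀ x y : E, ⟪w.linear x, w.linear y⟫_ℝ = ⟪x, y⟫_ℝ
  root : ∀ β ∈ D.Φ0, w.linear β ∈ D.Φ0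
  zero : ∀ β ∈ D.Φ0, ∃ n : ℤ, ⟪β, w 0⟫_ℝ = n

variable {D : Data E}

lemma IsW.one : IsW D (1 : E ≃ᵃ[ℝ] E) := by
  refine ⟨fun x y => by rw [lin_one, lin_one], fun β hβ => by rwa [lin_one], fun β hβ => ⟨0, by simp [one_apply']⟩⟩

lemma IsW.root_symm {w : E ≃ᵃ[ℝ] E} (hw : IsW D w) {β : E} (hβ : β ∈ D.Φ0) :
    ∃ γ ∈ D.Φ0, w.linear γ = β := by
  classical
  have hinj : Function.Injective (fun x : E => w.linear x) := fun a b h => by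
    simpa using w.linear.injective h
  have himg : D.Φ0.image (fun x => w.linear x) = D.Φ0 := by
    apply Finset.eq_of_subset_of_card_le
    · intro x hx
      obtain ⟨γ, hγ, rfl⟩ := Finset.mem_image.1 hx
      exact hw.root γ hγ
    · rw [Finset.card_image_of_injective _ hinj]
  rw [← himg] at hβ
  obtain ⟨γ, hγ, hh⟩ := Finset.mem_image.1 hβ
  exact ⟨γ, hγ, hh⟩

lemma IsW.mul {u v : E ≃ᵃ[ℝ] E} (hu : IsW D u) (hv : IsW D v) : IsW D (u * v) := by
  refine ⟨fun x y => by rw [lin_mul, lin_mul, hu.inn, hv.inn],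
    fun β hβ => by rw [lin_mul]; exact hu.root _ (hv.root β hβ), fun β hβ => ?_⟩
  rw [mul_apply', apply_eq_lin u (v 0), inner_add_right]
  obtain ⟨γ, hγ, hγe⟩ := hu.root_symm hβ
  have h1 : ⟪β, u.linear (v 0)⟫_ℝ = ⟪γ, v 0⟫_ℝ := by rw [← hγe, hu.inn]
  obtain ⟨n, hn⟩ := hv.zero γ hγ
  obtain ⟨m, hm⟩ := hu.zero β hβ
  exact ⟨n + m, by rw [h1, hn, hm]; push_cast; ring⟩

lemma IsW.inner_lin_inv {w : E ≃ᵃ[ℝ] E} (hw : IsW D w) (x z : E) :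
    ⟪x, w⁻¹.linear z⟫_ℝ = ⟪w.linear x, z⟫_ℝ := by
  rw [← hw.inn x (w⁻¹.linear z), lin_lin_inv]

lemma IsW.inv {w : E ≃ᵃ[ℝ] E} (hw : IsW D w) : IsW D w⁻¹ := by
  have hinn : ∀ x y : E, ⟪w⁻¹.linear x, w⁻¹.linear y⟫_ℝ = ⟪x, y⟫_ℝ := by
    intro x y
    rw [← hw.inn (w⁻¹.linear x) (w⁻¹.linear y), lin_lin_inv, lin_lin_inv]
  refine ⟨hinn, fun β hβ => ?_, fun β hβ => ?_⟩
  · obtain ⟨γ, hγ, hγe⟩ := hw.root_symm hβ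
    rw [← hγe, lin_inv_lin]
    exact hγ
  · have h0 : w⁻¹.linear (-(w 0)) = w⁻¹ 0 := by
      have h1 := lin_apply w⁻¹ (w 0)
      rw [inv_apply_apply'] at h1
      rw [map_neg, h1]
      abel
    obtain ⟨n, hn⟩ := hw.zero (w.linear β) (hw.root β hβ)
    refine ⟨-n, ?_⟩
    rw [← h0, hw.inner_lin_inv, inner_neg_right, hn]
    push_cast
    ring

-- wact as an action
lemma wact_def (w : E ≃ᵃ[ℝ] E) (a : E × ℝ) :
    wact w a = (w.linear a.1, a.2 - ⟪w.linear a.1, w 0⟫_ℝ) := rfl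

lemma wact_one (a : E × ℝ) : wact (1 : E ≃ᵃ[ℝ] E) a = a := by
  rw [wact_def]
  simp [lin_one, one_apply']

lemma wact_mul {u v : E ≃ᵃ[ℝ] E} (hu : IsW D u) (hv : IsW D v) (a : E × ℝ) :
    wact (u * v) a = wact u (wact v a) := by
  apply aval_ext
  intro y
  rw [aval_wact_apply _ (hu.mul hv).inn, aval_wact_apply _ hu.inn, aval_wact_apply _ hv.inn]
  rw [mul_inv_rev, mul_apply']

lemma wact_wact_inv {u : E ≃ᵃ[ℝ] E} (hu : IsW D u) (a : E × ℝ) :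
    wact u (wact u⁻¹ a) = a := by
  rw [← wact_mul hu hu.inv, mul_inv_cancel, wact_one]

lemma wact_inv_wact {u : E ≃ᵃ[ℝ] E} (hu : IsW D u) (a : E × ℝ) :
    wact u⁻¹ (wact u a) = a := by
  rw [← wact_mul hu.inv hu, inv_mul_cancel, wact_one]

lemma wact_neg (w : E ≃ᵃ[ℝ] E) (a : E × ℝ) : wact w (-a) = -wact w a := by
  simp only [wact_def, Prod.fst_neg, Prod.snd_neg, map_neg, inner_neg_left, Prod.neg_mk]
  exact Prod.ext rfl (by ring)

-- root data lemmas
lemma asimple_zero : D.asimple 0 = (-D.hroot, 1) := by simp [Data.asimple]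

lemma asimple_succ (i : Fin D.r) : D.asimple i.succ = (D.simple i, 0) := by
  simp [Data.asimple]

lemma asimple_fst_mem (j : Fin (D.r + 1)) : (D.asimple j).1 ∈ D.Φ0 := by
  induction j using Fin.cases with
  | zero =>
    rw [asimple_zero]
    exact D.root_neg_mem _ (D.pos_subset D.hroot_mem_pos)
  | succ i =>
    rw [asimple_succ]
    exact D.pos_subset (D.simple_mem_pos i)

lemma asimple_snd_int (j : Fin (D.r + 1)) : ∃ l : ℤ, (D.asimple j).2 = (l : ℝ) := by
  induction j using Fin.cases with
  | zero => exact ⟨1, by rw [asimple_zero]; norm_num⟩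
  | succ i => exact ⟨0, by rw [asimple_succ]; norm_num⟩

lemma root_ne_zero' {α : E} (hα : α ∈ D.Φ0) : α ≠ 0 := D.root_ne_zero α hα

lemma Qv_int {μ : E} (hμ : μ ∈ D.Qv) : ∀ β ∈ D.Φ0, ∃ n : ℤ, ⟪β, μ⟫_ℝ = (n : ℝ) := by
  induction hμ using AddSubgroup.closure_induction with
  | mem x hx =>
    obtain ⟨γ, hγ, rfl⟩ := hx
    intro β hβ
    obtain ⟨n, hn⟩ := D.root_crystal β hβ γ hγ
    exact ⟨n, by rw [real_inner_comm]; exact hn⟩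
  | zero => exact fun β hβ => ⟨0, by simp⟩
  | add x y hx hy ihx ihy =>
    intro β hβ
    obtain ⟨n, hn⟩ := ihx β hβ
    obtain ⟨m, hm⟩ := ihy β hβ
    exact ⟨n + m, by rw [inner_add_right, hn, hm]; push_cast; ring⟩
  | neg x hx ihx =>
    intro β hβ
    obtain ⟨n, hn⟩ := ihx β hβ
    exact ⟨-n, by rw [inner_neg_right, hn]; push_cast; ring⟩

lemma isW_aRefl {α : E} (hα : α ∈ D.Φ0) {c : ℝ} (hc : ∃ l : ℤ, c = (l : ℝ)) :
    IsW D (aRefl α c) := by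
  have h0 : α ≠ 0 := root_ne_zero' (D := D) hα
  refine ⟨lrefl_orth α h0 c, fun β hβ => ?_, fun β hβ => ?_⟩
  · have : (aRefl α c).linear β = aRefl α 0 β := by
      rw [aRefl_lin α h0, aRefl_apply α h0]
      rw [add_zero]
    rw [this]
    exact D.root_refl_mem α hα β hβ
  · obtain ⟨l, rfl⟩ := hc
    obtain ⟨n, hn⟩ := D.root_crystal β hβ α hα
    refine ⟨-l * n, ?_⟩
    rw [aRefl_zero α h0, inner_neg_right, real_inner_smul_right, real_inner_comm, hn]
    push_cast
    ring

lemma isW_tr {μ : E} (hμ : μ ∈ D.Qv) : IsW D (tr μ) := by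
  have happ : ∀ x : E, tr μ x = μ + x := fun x => rfl
  have hlin : ∀ x : E, (tr μ).linear x = x := by
    intro x
    rw [lin_apply, happ, happ]
    abel
  refine ⟨fun x y => by rw [hlin, hlin], fun β hβ => by rw [hlin]; exact hβ, fun β hβ => ?_⟩
  rw [happ, add_zero]
  exact Qv_int (D := D) hμ β hβ

lemma W_isW {w : E ≃ᵃ[ℝ] E} (hw : w ∈ D.W) : IsW D w := by
  induction hw using Subgroup.closure_induction with
  | mem x hx =>
    rcases hx with hx | hx
    · obtain ⟨γ, hγ, rfl⟩ := hx
      exact isW_aRefl hγ ⟨0, by norm_num⟩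
    · obtain ⟨μ, hμ, rfl⟩ := hx
      exact isW_tr hμ
  | one => exact IsW.one
  | mul x y hx hy ihx ihy => exact ihx.mul ihy
  | inv x hx ihx => exact ihx.inv

lemma isW_sgen (j : Fin (D.r + 1)) : IsW D (D.sgen j) :=
  isW_aRefl (asimple_fst_mem j) (asimple_snd_int j)

-- affine root positivity
lemma isAffRoot_wact {w : E ≃ᵃ[ℝ] E} (hw : IsW D w) {a : E × ℝ} (ha : D.IsAffRoot a) :
    D.IsAffRoot (wact w a) := by
  obtain ⟨h1, n, hn⟩ := ha
  obtain ⟨m, hm⟩ := hw.zero (w.linear a.1) (hw.root a.1 h1)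
  exact ⟨hw.root a.1 h1, n - m, by rw [wact_def]; dsimp only; rw [hn, hm]; push_cast; ring⟩

lemma isAffRoot_neg {a : E × ℝ} (ha : D.IsAffRoot a) : D.IsAffRoot (-a) := by
  obtain ⟨h1, n, hn⟩ := ha
  exact ⟨D.root_neg_mem a.1 h1, -n, by rw [Prod.snd_neg, hn]; push_cast; ring⟩

lemma pos_neg_false {a : E × ℝ} (h1 : D.IsPosAff a) (h2 : D.IsPosAff (-a)) : False := by
  obtain ⟨⟨hr1, -⟩, hp1⟩ := h1
  obtain ⟨-, hp2⟩ := h2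
  rw [Prod.snd_neg, Prod.fst_neg] at hp2
  rcases hp1 with hp1 | ⟨hz1, hm1⟩
  · rcases hp2 with hp2 | ⟨hz2, -⟩ <;> linarith
  · rcases hp2 with hp2 | ⟨-, hm2⟩
    · linarith
    · rcases D.pos_dichotomy a.1 hr1 with ⟨-, hn⟩ | ⟨hn, -⟩ <;> [exact hn hm2; exact hn hm1]

lemma root_pos_or_neg {a : E × ℝ} (ha : D.IsAffRoot a) :
    D.IsPosAff a ∨ D.IsPosAff (-a) := by
  obtain ⟨h1, n, hn⟩ := ha
  rcases lt_trichotomy n 0 with h | h | h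
  · refine Or.inr ⟨isAffRoot_neg (D := D) ⟨h1, n, hn⟩, Or.inl ?_⟩
    rw [Prod.snd_neg, hn]
    exact_mod_cast neg_pos.2 (by exact_mod_cast h)
  · subst h
    rcases D.pos_dichotomy a.1 h1 with ⟨hm, -⟩ | ⟨-, hm⟩
    · exact Or.inl ⟨⟨h1, 0, hn⟩, Or.inr ⟨by rw [hn]; norm_num, hm⟩⟩
    · refine Or.inr ⟨isAffRoot_neg (D := D) ⟨h1, 0, hn⟩, Or.inr ⟨?_, hm⟩⟩
      rw [Prod.snd_neg, hn]
      norm_num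
  · exact Or.inl ⟨⟨h1, n, hn⟩, Or.inl (by rw [hn]; exact_mod_cast h)⟩

lemma not_pos_iff_neg {a : E × ℝ} (ha : D.IsAffRoot a) :
    ¬D.IsPosAff a ↔ D.IsPosAff (-a) := by
  constructor
  · intro h
    rcases root_pos_or_neg (D := D) ha with h' | h'
    · exact absurd h' h
    · exact h'
  · intro h h'
    exact pos_neg_false (D := D) h' h

lemma asimple_pos (j : Fin (D.r + 1)) : D.IsPosAff (D.asimple j) := by
  refine ⟨⟨asimple_fst_mem j, asimple_snd_int j⟩, ?_⟩
  induction j using Fin.cases with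
  | zero => rw [asimple_zero]; exact Or.inl (by norm_num)
  | succ i => rw [asimple_succ]; exact Or.inr ⟨rfl, D.simple_mem_pos i⟩


-- sums of simple affine roots
lemma sum_asimple_fst (n : Fin (D.r + 1) → ℝ) :
    (∑ t, n t • D.asimple t).1 = n 0 • (-D.hroot) + ∑ i, n i.succ • D.simple i := by
  rw [Prod.fst_sum, Fin.sum_univ_succ]
  simp only [Prod.smul_fst, asimple_zero, asimple_succ]

lemma sum_asimple_snd (n : Fin (D.r + 1) → ℝ) :
    (∑ t, n t • D.asimple t).2 = n 0 := by
  rw [Prod.snd_sum, Fin.sum_univ_succ]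
  have h1 : (n 0 • D.asimple 0).2 = n 0 := by
    rw [Prod.smul_snd, asimple_zero]
    simp
  have h2 : ∀ i : Fin D.r, (n i.succ • D.asimple i.succ).2 = 0 := by
    intro i
    rw [Prod.smul_snd, asimple_succ]
    simp
  rw [h1, Finset.sum_congr rfl fun i _ => h2 i]
  simp

lemma asimple_indep (f : Fin (D.r + 1) → ℝ) (h : ∑ t, f t • D.asimple t = 0) :
    ∀ t, f t = 0 := by
  have h2 : f 0 = 0 := by
    have := congrArg Prod.snd h
    rwa [sum_asimple_snd] at this
  have h1 : ∑ i, f i.succ • D.simple i = 0 := by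
    have := congrArg Prod.fst h
    rw [sum_asimple_fst, h2, zero_smul, zero_add] at this
    exact this
  have h3 := (Fintype.linearIndependent_iff.1 D.simple_indep) (fun i => f i.succ) h1
  intro t
  induction t using Fin.cases with
  | zero => exact h2
  | succ i => exact h3 i

/-- P1: positive affine roots are ℕ-combinations of the simple affine roots. -/
lemma pos_combo {a : E × ℝ} (ha : D.IsPosAff a) :
    ∃ n : Fin (D.r + 1) → ℕ, a = ∑ t, ((n t : ℝ)) • D.asimple t := by
  obtain ⟨⟨hr, l, hl⟩, hp⟩ := ha
  have pair_eq : ∀ (n : Fin (D.r + 1) → ℕ),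
      a.1 = (n 0 : ℝ) • (-D.hroot) + ∑ i, ((n i.succ : ℝ)) • D.simple i →
      a.2 = (n 0 : ℝ) → a = ∑ t, ((n t : ℝ)) • D.asimple t := by
    intro n hfst hsnd
    refine Prod.ext ?_ ?_
    · rw [sum_asimple_fst]; exact hfst
    · rw [sum_asimple_snd]; exact hsnd
  rcases hp with hpos | ⟨hz, hm⟩
  · -- l ≥ 1
    have hl1 : 1 ≤ l := by
      rw [hl] at hpos
      exact_mod_cast hpos
    obtain ⟨K, hK⟩ : ∃ K : ℕ, l = (K : ℤ) + 1 := ⟨(l - 1).toNat, by omega⟩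
    obtain ⟨p, hp2⟩ := D.hroot_highest (-a.1) (D.root_neg_mem a.1 hr)
    rw [sub_neg_eq_add] at hp2
    obtain ⟨q, hq⟩ := D.pos_nat_comb D.hroot D.hroot_mem_pos
    refine ⟨Fin.cases (K + 1) (fun i => p i + K * q i), pair_eq _ ?_ ?_⟩
    · simp only [Fin.cases_zero, Fin.cases_succ]
      push_cast
      have hsum : ∑ i, ((p i : ℝ) + (K : ℝ) * (q i : ℝ)) • D.simple i =
          (D.hroot + a.1) + (K : ℝ) • D.hroot := by
        rw [Finset.sum_congr rfl fun i _ => add_smul ((p i : ℝ)) ((K : ℝ) * (q i : ℝ)) (D.simple i),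
          Finset.sum_add_distrib]
        rw [← hp2]
        congr 1
        rw [Finset.sum_congr rfl fun i _ => mul_smul (K : ℝ) ((q i : ℝ)) (D.simple i),
          ← Finset.smul_sum, ← hq]
      rw [hsum]
      module
    · simp only [Fin.cases_zero]
      rw [hl, hK]
      push_cast
      ring
  · -- l = 0 and a.1 positive
    obtain ⟨p, hp2⟩ := D.pos_nat_comb a.1 hm
    refine ⟨Fin.cases 0 p, pair_eq _ ?_ ?_⟩
    · simp only [Fin.cases_zero, Fin.cases_succ]
      rw [hp2]
      simp
    · simp only [Fin.cases_zero]
      rw [hz]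
      simp

/-- P2: an affine root which is an ℕ-combination of simple affine roots is positive. -/
lemma combo_pos {a : E × ℝ} (ha : D.IsAffRoot a) (n : Fin (D.r + 1) → ℕ)
    (he : a = ∑ t, ((n t : ℝ)) • D.asimple t) : D.IsPosAff a := by
  have hsnd : a.2 = (n 0 : ℝ) := by rw [he, sum_asimple_snd]
  rcases Nat.eq_zero_or_pos (n 0) with h0 | h0
  · have hfst : a.1 = ∑ i, ((n i.succ : ℝ)) • D.simple i := by
      have := congrArg Prod.fst he
      rwa [sum_asimple_fst, h0, Nat.cast_zero, zero_smul, zero_add] at this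
    refine ⟨ha, Or.inr ⟨by rw [hsnd, h0]; norm_num, ?_⟩⟩
    rcases D.pos_dichotomy a.1 ha.1 with ⟨hm, -⟩ | ⟨-, hm⟩
    · exact hm
    · exfalso
      obtain ⟨m, hme⟩ := D.pos_nat_comb (-a.1) hm
      have hzero : ∑ i, (((n i.succ : ℝ)) + (m i : ℝ)) • D.simple i = 0 := by
        rw [Finset.sum_congr rfl fun i _ => add_smul ((n i.succ : ℝ)) ((m i : ℝ)) (D.simple i),
          Finset.sum_add_distrib, ← hfst, ← hme]
        abel
      have hc := (Fintype.linearIndependent_iff.1 D.simple_indep)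
        (fun i : Fin D.r => ((n i.succ : ℝ)) + (m i : ℝ)) hzero
      have hn0 : ∀ i : Fin D.r, ((n i.succ : ℝ)) = 0 := by
        intro i
        have h3 : ((n i.succ : ℝ)) + (m i : ℝ) = 0 := hc i
        have h1 : (0:ℝ) ≤ (n i.succ : ℝ) := Nat.cast_nonneg _
        have h2 : (0:ℝ) ≤ (m i : ℝ) := Nat.cast_nonneg _
        linarith
      have : a.1 = 0 := by
        rw [hfst, Finset.sum_congr rfl fun i _ => by rw [hn0 i, zero_smul]]
        simp
      exact root_ne_zero' (D := D) ha.1 this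
  · exact ⟨ha, Or.inl (by rw [hsnd]; exact_mod_cast h0)⟩

-- wact is linear in the root argument
def wactL (w : E ≃ᵃ[ℝ] E) : (E × ℝ) →ₗ[ℝ] (E × ℝ) where
  toFun a := wact w a
  map_add' a b := by
    simp only [wact_def, Prod.fst_add, Prod.snd_add, map_add, inner_add_left, Prod.mk_add_mk]
    exact Prod.ext rfl (by ring)
  map_smul' r a := by
    simp only [wact_def, Prod.smul_fst, Prod.smul_snd, map_smul, real_inner_smul_left,
      RingHom.id_apply, Prod.smul_mk, smul_eq_mul]
    exact Prod.ext rfl (by ring)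

lemma wactL_apply (w : E ≃ᵃ[ℝ] E) (a : E × ℝ) : wactL w a = wact w a := rfl

-- aval arithmetic
lemma aval_sub_smul (a b : E × ℝ) (r : ℝ) (y : E) :
    aval (a - r • b) y = aval a y - r * aval b y := by
  simp only [aval, Prod.fst_sub, Prod.snd_sub, Prod.smul_fst, Prod.smul_snd, inner_sub_left,
    real_inner_smul_left, smul_eq_mul]
  ring

lemma wact_sgen (j : Fin (D.r + 1)) (a : E × ℝ) :
    wact (D.sgen j) a = a - ⟪cv (D.asimple j).1, a.1⟫_ℝ • D.asimple j := by
  have hβ : (D.asimple j).1 ≠ 0 := root_ne_zero' (D := D) (asimple_fst_mem j)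
  apply aval_ext
  intro y
  rw [aval_wact_apply _ (isW_sgen (D := D) j).inn]
  have hinv : (D.sgen j)⁻¹ = D.sgen j := aRefl_inv _ hβ _
  rw [hinv]
  have happ : D.sgen j y = y - aval (D.asimple j) y • cv (D.asimple j).1 := by
    rw [Data.sgen, aRefl_apply' _ hβ]
  rw [happ, aval_sub_smul a (D.asimple j) _ y]
  simp only [aval, inner_sub_right, real_inner_smul_right]
  rw [real_inner_comm a.1 (cv (D.asimple j).1)]
  ring

/-- L1: the simple affine reflection `s_j` permutes the positive roots other than `α_j`. -/
lemma sgen_perm {a : E × ℝ} (j : Fin (D.r + 1)) (ha : D.IsPosAff a)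
    (hne : a ≠ D.asimple j) : D.IsPosAff (wact (D.sgen j) a) := by
  by_contra h
  have hroot' : D.IsAffRoot (wact (D.sgen j) a) := isAffRoot_wact (isW_sgen (D := D) j) ha.1
  have hneg := (not_pos_iff_neg (D := D) hroot').1 h
  obtain ⟨n, he⟩ := pos_combo (D := D) ha
  obtain ⟨m, hme⟩ := pos_combo (D := D) hneg
  set k := ⟪cv (D.asimple j).1, a.1⟫_ℝ with hk
  have hid : a + -(wact (D.sgen j) a) = k • D.asimple j := by
    rw [wact_sgen]
    abel
  have hsum : ∑ t, (((n t : ℝ)) + ((m t : ℝ))) • D.asimple t = k • D.asimple j := by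
    rw [Finset.sum_congr rfl fun t _ => add_smul ((n t : ℝ)) ((m t : ℝ)) (D.asimple t),
      Finset.sum_add_distrib, ← he, ← hme]
    exact hid
  have hite : ∑ t, (if t = j then k else 0) • D.asimple t = k • D.asimple j := by
    simp [Finset.sum_ite_eq']
  have hzero : ∑ t, (((n t : ℝ)) + ((m t : ℝ)) - (if t = j then k else 0)) • D.asimple t
      = 0 := by
    rw [Finset.sum_congr rfl fun t _ =>
      sub_smul (((n t : ℝ)) + ((m t : ℝ))) (if t = j then k else 0) (D.asimple t),
      Finset.sum_sub_distrib, hsum, hite]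
    abel
  have hc := asimple_indep (D := D) _ hzero
  have hnt : ∀ t, t ≠ j → ((n t : ℝ)) = 0 := by
    intro t ht
    have := hc t
    rw [if_neg ht] at this
    have h1 : (0:ℝ) ≤ (n t : ℝ) := Nat.cast_nonneg _
    have h2 : (0:ℝ) ≤ (m t : ℝ) := Nat.cast_nonneg _
    linarith
  have hae : a = ((n j : ℝ)) • D.asimple j := by
    rw [he, Finset.sum_eq_single j]
    · intro t _ ht
      rw [hnt t ht, zero_smul]
    · intro habs
      exact absurd (Finset.mem_univ j) habs
  have hfst : a.1 = ((n j : ℝ)) • (D.asimple j).1 := by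
    rw [hae, Prod.smul_fst]
  have hred := D.root_reduced (D.asimple j).1 (asimple_fst_mem j) ((n j : ℝ))
    (by rw [← hfst]; exact ha.1.1)
  rcases hred with h1 | h1
  · exact hne (by rw [hae, h1, one_smul])
  · have : (0:ℝ) ≤ (n j : ℝ) := Nat.cast_nonneg _
    rw [h1] at this
    linarith


lemma wact_sgen_sq (j : Fin (D.r + 1)) (a : E × ℝ) :
    wact (D.sgen j) (wact (D.sgen j) a) = a := by
  have hβ : (D.asimple j).1 ≠ 0 := root_ne_zero' (D := D) (asimple_fst_mem j)
  rw [← wact_mul (isW_sgen (D := D) j) (isW_sgen (D := D) j)]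
  rw [show D.sgen j * D.sgen j = 1 from aRefl_sq _ hβ _, wact_one]

lemma sgen_sq (j : Fin (D.r + 1)) : D.sgen j * D.sgen j = 1 :=
  aRefl_sq _ (root_ne_zero' (D := D) (asimple_fst_mem j)) _

lemma wact_sgen_self (j : Fin (D.r + 1)) :
    wact (D.sgen j) (D.asimple j) = -D.asimple j := by
  have hβ : (D.asimple j).1 ≠ 0 := root_ne_zero' (D := D) (asimple_fst_mem j)
  rw [wact_sgen]
  rw [real_inner_comm, inner_cv_self _ hβ]
  rw [show (2:ℝ) • D.asimple j = D.asimple j + D.asimple j by rw [two_smul]]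
  abel

lemma piSet_finite {w : E ≃ᵃ[ℝ] E} (hw : IsW D w) : (D.PiSet w).Finite := by
  classical
  have hne : D.Φ0.Nonempty := ⟨D.hroot, D.pos_subset D.hroot_mem_pos⟩
  set M := D.Φ0.sup' hne (fun γ => ⟪γ, w 0⟫_ℝ) with hM
  set S : Finset (E × ℝ) :=
    (D.Φ0 ×ˢ Finset.Icc (0 : ℤ) ⌊M⌋).image (fun p => (p.1, ((p.2 : ℤ) : ℝ))) with hS
  refine Set.Finite.subset S.finite_toSet ?_
  rintro a ⟨⟨⟨hr, l, hl⟩, hp⟩, hneg⟩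
  have hneg' := (not_pos_iff_neg (D := D) (isAffRoot_wact hw ⟨hr, l, hl⟩)).1 hneg
  have hge : 0 ≤ l := by
    rcases hp with hp | ⟨hz, -⟩
    · rw [hl] at hp
      exact_mod_cast le_of_lt (by exact_mod_cast hp)
    · rw [hl] at hz
      exact_mod_cast le_of_eq (by exact_mod_cast hz.symm)
  have hle : (l : ℝ) ≤ ⟪w.linear a.1, w 0⟫_ℝ := by
    rcases hneg'.2 with hp | ⟨hz, -⟩
    · rw [Prod.snd_neg, wact_def] at hp
      dsimp only at hp
      rw [hl] at hp
      linarith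
    · rw [Prod.snd_neg, wact_def] at hz
      dsimp only at hz
      rw [hl] at hz
      linarith
  have hlM : (l : ℝ) ≤ M := le_trans hle (Finset.le_sup' (fun γ => ⟪γ, w 0⟫_ℝ) (hw.root a.1 hr))
  have hfl : l ≤ ⌊M⌋ := Int.le_floor.2 hlM
  simp only [hS, Finset.coe_image, Set.mem_image, Finset.mem_coe, Finset.mem_product,
    Finset.mem_Icc]
  exact ⟨(a.1, l), ⟨hr, hge, hfl⟩, Prod.ext rfl hl.symm⟩

lemma wact_sgen_inj (j : Fin (D.r + 1)) :
    Function.Injective (fun a : E × ℝ => wact (D.sgen j) a) :=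
  Function.LeftInverse.injective (g := fun a => wact (D.sgen j) a)
    (fun a => wact_sgen_sq (D := D) j a)

/-- L2, increasing case. -/
lemma len_mul_sgen_pos {w : E ≃ᵃ[ℝ] E} (hw : IsW D w) (j : Fin (D.r + 1))
    (h : D.IsPosAff (wact w (D.asimple j))) :
    D.len (w * D.sgen j) = D.len w + 1 := by
  classical
  have hs := isW_sgen (D := D) j
  have hset : D.PiSet (w * D.sgen j)
      = insert (D.asimple j) ((fun a => wact (D.sgen j) a) '' D.PiSet w) := by
    ext a
    constructor
    · rintro ⟨hpos, hneg⟩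
      rw [wact_mul hw hs] at hneg
      by_cases haj : a = D.asimple j
      · exact haj ▸ Set.mem_insert _ _
      · refine Set.mem_insert_iff.2 (Or.inr ⟨wact (D.sgen j) a, ⟨?_, ?_⟩, wact_sgen_sq (D := D) j a⟩)
        · exact sgen_perm (D := D) j hpos haj
        · exact hneg
    · intro ha
      rcases Set.mem_insert_iff.1 ha with rfl | ⟨b, ⟨hbpos, hbneg⟩, rfl⟩
      · refine ⟨asimple_pos (D := D) j, ?_⟩
        rw [wact_mul hw hs, wact_sgen_self (D := D) j, wact_neg]
        exact fun hcon => pos_neg_false (D := D) h (by simpa using hcon)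
      · have hbj : b ≠ D.asimple j := fun hbj => hbneg (hbj ▸ h)
        refine ⟨sgen_perm (D := D) j hbpos hbj, ?_⟩
        rw [wact_mul hw hs, wact_sgen_sq (D := D) j b]
        exact hbneg
  have hnotmem : D.asimple j ∉ (fun a => wact (D.sgen j) a) '' D.PiSet w := by
    rintro ⟨b, ⟨hbpos, -⟩, hb⟩
    have hb' : b = -D.asimple j := by
      have := congrArg (fun x => wact (D.sgen j) x) hb
      dsimp at this
      rw [wact_sgen_sq (D := D) j b, wact_sgen_self (D := D) j] at this
      exact this
    rw [hb'] at hbpos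
    exact pos_neg_false (D := D) (asimple_pos (D := D) j) hbpos
  rw [Data.len, hset, Set.ncard_insert_of_notMem hnotmem
    ((piSet_finite (D := D) hw).image _),
    Set.ncard_image_of_injective _ (wact_sgen_inj (D := D) j)]
  rfl

/-- L2, decreasing case. -/
lemma len_mul_sgen_neg {w : E ≃ᵃ[ℝ] E} (hw : IsW D w) (j : Fin (D.r + 1))
    (h : ¬D.IsPosAff (wact w (D.asimple j))) :
    D.len w = D.len (w * D.sgen j) + 1 := by
  have hs := isW_sgen (D := D) j
  have haff : D.IsAffRoot (wact w (D.asimple j)) :=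
    isAffRoot_wact hw ⟨asimple_fst_mem j, asimple_snd_int j⟩
  have hpos' : D.IsPosAff (wact (w * D.sgen j) (D.asimple j)) := by
    rw [wact_mul hw hs, wact_sgen_self (D := D) j, wact_neg]
    exact (not_pos_iff_neg (D := D) haff).1 h
  have := len_mul_sgen_pos (D := D) (hw.mul hs) j hpos'
  rwa [mul_assoc, sgen_sq (D := D) j, mul_one] at this

lemma len_le_mul_sgen {w : E ≃ᵃ[ℝ] E} (hw : IsW D w) (j : Fin (D.r + 1)) :
    D.len w ≤ D.len (w * D.sgen j) + 1 := by
  by_cases h : D.IsPosAff (wact w (D.asimple j))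
  · rw [len_mul_sgen_pos (D := D) hw j h]
    omega
  · exact le_of_eq (len_mul_sgen_neg (D := D) hw j h)

lemma len_inv {w : E ≃ᵃ[ℝ] E} (hw : IsW D w) : D.len w⁻¹ = D.len w := by
  have hset : D.PiSet w⁻¹ = (fun a => -wact w a) '' D.PiSet w := by
    ext b
    constructor
    · rintro ⟨hbpos, hbneg⟩
      refine ⟨-wact w⁻¹ b, ⟨?_, ?_⟩, ?_⟩
      · exact (not_pos_iff_neg (D := D) (isAffRoot_wact hw.inv hbpos.1)).1 hbneg
      · rw [wact_neg, wact_wact_inv (D := D) hw]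
        intro hcon
        exact pos_neg_false (D := D) hcon (by simpa using hbpos)
      · show -wact w (-wact w⁻¹ b) = b
        rw [wact_neg, wact_wact_inv (D := D) hw, neg_neg]
    · rintro ⟨a, ⟨hapos, haneg⟩, rfl⟩
      refine ⟨(not_pos_iff_neg (D := D) (isAffRoot_wact hw hapos.1)).1 haneg, ?_⟩
      rw [wact_neg, wact_inv_wact (D := D) hw]
      intro hcon
      exact pos_neg_false (D := D) hcon (by simpa using hapos)
  have hinj : Function.Injective (fun a : E × ℝ => -wact w a) := by
    intro a b hab
    dsimp at hab
    have h1 : wact w a = wact w b := by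
      have := congrArg Neg.neg hab
      simpa using this
    have := congrArg (fun x => wact w⁻¹ x) h1
    rwa [wact_inv_wact (D := D) hw, wact_inv_wact (D := D) hw] at this
  rw [Data.len, Data.len, hset, Set.ncard_image_of_injective _ hinj]

/-- L3: if `w` maps every simple affine root to a positive root then `Π(w) = ∅`. -/
lemma piSet_empty {w : E ≃ᵃ[ℝ] E} (hw : IsW D w)
    (hall : ∀ j, D.IsPosAff (wact w (D.asimple j))) : D.PiSet w = ∅ := by
  classical
  ext a
  simp only [Set.mem_empty_iff_false, iff_false]
  rintro ⟨hpos, hneg⟩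
  obtain ⟨n, he⟩ := pos_combo (D := D) hpos
  choose m hm using fun t => pos_combo (D := D) (hall t)
  have hW : wact w a = ∑ s, ((∑ t, n t * m t s : ℕ) : ℝ) • D.asimple s := by
    have h1 : wact w a = ∑ t, ((n t : ℝ)) • wact w (D.asimple t) := by
      rw [← wactL_apply, he, map_sum]
      exact Finset.sum_congr rfl fun t _ => by rw [map_smul, wactL_apply]
    rw [h1, Finset.sum_congr rfl fun t _ => by rw [hm t]]
    rw [Finset.sum_congr rfl fun t (_ : t ∈ Finset.univ) => Finset.smul_sum
      (r := ((n t : ℝ))) (s := Finset.univ) (f := fun s => ((m t s : ℝ)) • D.asimple s)]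
    rw [Finset.sum_comm]
    refine Finset.sum_congr rfl fun s _ => ?_
    rw [Finset.sum_congr rfl fun t (_ : t ∈ Finset.univ) =>
      smul_smul ((n t : ℝ)) ((m t s : ℝ)) (D.asimple s), ← Finset.sum_smul]
    congr 1
    push_cast
    ring
  exact hneg (combo_pos (D := D) (isAffRoot_wact hw hpos.1) _ hW)


-- conjugation of affine reflections
lemma cv_lin {w : E ≃ᵃ[ℝ] E} (hw : IsW D w) (α : E) :
    cv (w.linear α) = w.linear (cv α) := by
  rw [cv, cv, hw.inn α α, map_smul]

lemma apply_sub' (u : E ≃ᵃ[ℝ] E) (x v : E) : u (x - v) = u x - u.linear v := by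
  rw [apply_eq_lin u (x - v), map_sub u.linear, apply_eq_lin u x]
  abel

lemma conj_aRefl {w : E ≃ᵃ[ℝ] E} (hw : IsW D w) {α : E} (hα : α ∈ D.Φ0) (c : ℝ) :
    w * aRefl α c * w⁻¹ = aRefl (wact w (α, c)).1 (wact w (α, c)).2 := by
  have hne : α ≠ 0 := root_ne_zero' (D := D) hα
  have hne' : w.linear α ≠ 0 := root_ne_zero' (D := D) (hw.root α hα)
  ext y
  rw [mul_apply', mul_apply', aRefl_apply α hne]
  rw [apply_sub', apply_inv_apply', map_smul]
  have h3 : ⟪w.linear α, y⟫_ℝ + (c - ⟪w.linear α, w 0⟫_ℝ) = ⟪α, w⁻¹ y⟫_ℝ + c := by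
    have h4 := aval_wact_apply w hw.inn (α, c) y
    rw [aval, aval] at h4
    exact h4
  show _ = aRefl (w.linear α) (c - ⟪w.linear α, w 0⟫_ℝ) y
  rw [aRefl_apply _ hne', cv_lin (D := D) hw, h3]

lemma conj_aRefl' {w : E ≃ᵃ[ℝ] E} (hw : IsW D w) {b : E × ℝ} (hb : b.1 ∈ D.Φ0) :
    w * aRefl b.1 b.2 * w⁻¹ = aRefl (wact w b).1 (wact w b).2 := by
  have := conj_aRefl (D := D) hw hb b.2
  rwa [Prod.mk.eta] at this

lemma aRefl_pair_neg {b : E × ℝ} (hb : b.1 ≠ 0) :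
    aRefl (-b).1 (-b).2 = aRefl b.1 b.2 := by
  rw [Prod.fst_neg, Prod.snd_neg]
  exact aRefl_neg b.1 hb b.2

/-- Prop R: if `w·b < 0` for a positive affine root `b`, then right multiplication by
`s_b` decreases length. -/
lemma propR (N : ℕ) : ∀ w : E ≃ᵃ[ℝ] E, IsW D w → D.len w = N →
    ∀ b : E × ℝ, D.IsPosAff b → ¬D.IsPosAff (wact w b) →
    D.len (w * aRefl b.1 b.2) < D.len w := by
  induction N using Nat.strong_induction_on with
  | _ N ih =>
    intro w hw hlen b hbpos hbneg
    have hb1 : b.1 ∈ D.Φ0 := hbpos.1.1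
    have hbmem : b ∈ D.PiSet w := ⟨hbpos, hbneg⟩
    obtain ⟨j, hj⟩ : ∃ j, ¬D.IsPosAff (wact w (D.asimple j)) := by
      by_contra hcon
      push_neg at hcon
      have := piSet_empty (D := D) hw hcon
      rw [this] at hbmem
      exact hbmem
    have hs := isW_sgen (D := D) j
    have hlw' : D.len w = D.len (w * D.sgen j) + 1 := len_mul_sgen_neg (D := D) hw j hj
    by_cases hbj : b = D.asimple j
    · have heq : aRefl b.1 b.2 = D.sgen j := by rw [hbj]; rfl
      rw [heq, hlw']
      omega
    · set b' := wact (D.sgen j) b with hb'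
      have hb'pos : D.IsPosAff b' := sgen_perm (D := D) j hbpos hbj
      have hneg' : ¬D.IsPosAff (wact (w * D.sgen j) b') := by
        rw [wact_mul hw hs, hb', wact_sgen_sq (D := D) j b]
        exact hbneg
      have ihres := ih (D.len (w * D.sgen j)) (by omega) (w * D.sgen j) (hw.mul hs) rfl
        b' hb'pos hneg'
      have hsinv : (D.sgen j)⁻¹ = D.sgen j := inv_eq_of_mul_eq_one_right (sgen_sq (D := D) j)
      have hconj : aRefl b'.1 b'.2 = D.sgen j * aRefl b.1 b.2 * D.sgen j := by
        have := conj_aRefl' (D := D) hs hb1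
        rw [hsinv] at this
        exact this.symm
      have hkey : w * D.sgen j * aRefl b'.1 b'.2 * D.sgen j = w * aRefl b.1 b.2 := by
        rw [hconj]
        rw [show w * D.sgen j * (D.sgen j * aRefl b.1 b.2 * D.sgen j) * D.sgen j
          = w * (D.sgen j * D.sgen j) * aRefl b.1 b.2 * (D.sgen j * D.sgen j) by group]
        rw [sgen_sq (D := D) j, mul_one, mul_one]
      have hkey2 : (w * aRefl b.1 b.2) * D.sgen j = w * D.sgen j * aRefl b'.1 b'.2 := by
        rw [← hkey]
        rw [show w * D.sgen j * aRefl b'.1 b'.2 * D.sgen j * D.sgen j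
          = w * D.sgen j * aRefl b'.1 b'.2 * (D.sgen j * D.sgen j) by group]
        rw [sgen_sq (D := D) j, mul_one]
      have hWb : IsW D (aRefl b.1 b.2) := isW_aRefl hb1 hbpos.1.2
      have hle := len_le_mul_sgen (D := D) (hw.mul hWb) j
      rw [hkey2] at hle
      omega

lemma refl_pos_of_len_lt {u : E ≃ᵃ[ℝ] E} (hu : IsW D u) {b : E × ℝ} (hb : D.IsPosAff b)
    (hlen : D.len u < D.len (aRefl b.1 b.2 * u)) : D.IsPosAff (wact u⁻¹ b) := by
  by_contra h
  have hbne : b.1 ≠ 0 := root_ne_zero' (D := D) hb.1.1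
  have h2 := propR (D := D) (D.len u⁻¹) u⁻¹ hu.inv rfl b hb h
  have hR : IsW D (aRefl b.1 b.2) := isW_aRefl hb.1.1 hb.1.2
  have e1 : (u⁻¹ * aRefl b.1 b.2)⁻¹ = aRefl b.1 b.2 * u := by
    rw [mul_inv_rev, inv_inv, aRefl_inv _ hbne _]
  have e2 := len_inv (D := D) (hu.inv.mul hR)
  rw [e1] at e2
  rw [len_inv (D := D) hu] at h2
  omega

lemma aval_nonneg_Cbar {a : E × ℝ} (ha : D.IsPosAff a) {c : E} (hc : c ∈ D.Cbar) :
    0 ≤ aval a c := by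
  have hclosed : IsClosed {y : E | 0 ≤ aval a y} := by
    apply isClosed_le continuous_const
    exact ((continuous_const.inner continuous_id).add continuous_const : Continuous
      fun y : E => ⟪a.1, y⟫_ℝ + a.2)
  have hsub : D.Cp ⊆ {y : E | 0 ≤ aval a y} := by
    intro y hy
    obtain ⟨⟨h1, l, hl⟩, hp⟩ := ha
    rcases hp with hp | ⟨hz, hm⟩
    · have hl1 : (1 : ℝ) ≤ l := by
        rw [hl] at hp
        exact_mod_cast (by exact_mod_cast hp : (0:ℤ) < l)
      rcases D.pos_dichotomy a.1 h1 with ⟨hm, -⟩ | ⟨-, hm⟩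
      · have := (hy a.1 hm).1
        show 0 ≤ ⟪a.1, y⟫_ℝ + a.2
        rw [hl]
        linarith
      · have := (hy (-a.1) hm).2
        rw [inner_neg_left] at this
        show 0 ≤ ⟪a.1, y⟫_ℝ + a.2
        rw [hl]
        linarith
    · have := (hy a.1 hm).1
      show 0 ≤ ⟪a.1, y⟫_ℝ + a.2
      rw [hz]
      linarith
  exact (closure_minimal hsub hclosed) hc

/-- The geometric per-step lemma. -/
lemma step_precLE {u : E ≃ᵃ[ℝ] E} (hu : IsW D u) {b : E × ℝ} (hb : D.IsPosAff b)
    (hlen : D.len u < D.len (aRefl b.1 b.2 * u)) {c : E} (hc : c ∈ D.Cbar) :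
    D.precLE (u c) (aRefl b.1 b.2 (u c)) := by
  have hb1 : b.1 ∈ D.Φ0 := hb.1.1
  have hbne : b.1 ≠ 0 := root_ne_zero' (D := D) hb1
  obtain ⟨l, hl⟩ := hb.1.2
  set y := u c with hy
  set z := aRefl b.1 b.2 y with hz
  set A := aval b y with hA
  have hApos : 0 ≤ A := by
    have h1 := refl_pos_of_len_lt (D := D) hu hb hlen
    have h2 := aval_nonneg_Cbar (D := D) h1 hc
    rw [aval_wact_apply _ hu.inv.inn, inv_inv] at h2
    exact h2
  have hzy : z = y - A • cv b.1 := by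
    rw [hz, aRefl_apply b.1 hbne b.2 y, hA, aval]
  have hyz : y = aRefl b.1 b.2 z := by
    rw [hz, aRefl_invol b.1 hbne b.2 y]
  rcases eq_or_lt_of_le hApos with hA0 | hApos'
  · right
    rw [hzy, ← hA0, zero_smul, sub_zero]
  · left
    have hinner_y : ⟪b.1, y⟫_ℝ = A - l := by
      rw [hA, aval, hl]
      ring
    have hinner_z : ⟪b.1, z⟫_ℝ = -A - l := by
      rw [hzy, inner_sub_right, real_inner_smul_right, inner_cv_self b.1 hbne, hinner_y]
      ring
    have hl0 : (0 : ℤ) ≤ l := by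
      rcases hb.2 with hp | ⟨hzz, -⟩
      · rw [hl] at hp
        exact_mod_cast le_of_lt (by exact_mod_cast hp)
      · rw [hl] at hzz
        exact_mod_cast le_of_eq (by exact_mod_cast hzz.symm)
    by_cases hmem : b.1 ∈ D.pos
    · refine Relation.TransGen.single ⟨b.1, hmem, ⟨l, by rwa [← hl]⟩, ?_⟩
      rcases eq_or_lt_of_le hl0 with hl00 | hl1
      · right
        constructor
        · rw [hinner_y, hinner_z, ← hl00]
          push_cast
          ring
        · rw [hinner_y, ← hl00]
          push_cast
          linarith
      · left
        have hl1' : (1 : ℝ) ≤ l := by exact_mod_cast hl1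
        rw [hinner_y, hinner_z]
        have habs : |-A - (l : ℝ)| = A + l := by
          rw [abs_of_neg (show -A - (l:ℝ) < 0 by linarith)]
          ring
        rw [habs, abs_lt]
        exact ⟨by linarith, by linarith⟩
    · have hmem' : -b.1 ∈ D.pos := by
        rcases D.pos_dichotomy b.1 hb1 with ⟨hmm, -⟩ | ⟨-, hmm⟩
        · exact absurd hmm hmem
        · exact hmm
      have hl1 : (0 : ℤ) < l := by
        rcases hb.2 with hp | ⟨hzz, hmm⟩
        · rw [hl] at hp
          exact_mod_cast hp
        · exact absurd hmm hmem
      have hl1' : (1 : ℝ) ≤ l := by exact_mod_cast hl1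
      refine Relation.TransGen.single ⟨-b.1, hmem', ⟨-l, ?_⟩, ?_⟩
      · have hflip : aRefl (-b.1) ((-l : ℤ) : ℝ) = aRefl b.1 b.2 := by
          rw [hl]
          push_cast
          exact aRefl_neg b.1 hbne l
        rw [hflip]
        exact hyz
      · left
        rw [inner_neg_left, inner_neg_left, hinner_y, hinner_z]
        have habs : |(-(-A - (l : ℝ)))| = A + l := by
          rw [abs_of_pos (show (0:ℝ) < -(-A - (l:ℝ)) by linarith)]
          ring
        rw [habs, abs_lt]
        exact ⟨by linarith, by linarith⟩


lemma sgen_zero_eq : D.sgen 0 = tr (cv D.hroot) * aRefl (-D.hroot) 0 := by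
  have hφ : D.hroot ∈ D.Φ0 := D.pos_subset D.hroot_mem_pos
  have hφne : D.hroot ≠ 0 := root_ne_zero' (D := D) hφ
  have hnφ : -D.hroot ≠ 0 := by simpa using hφne
  have h1 : D.sgen 0 = aRefl (-D.hroot) 1 := by rw [Data.sgen, asimple_zero]
  rw [h1]
  ext y
  have htr : ∀ x : E, tr (cv D.hroot) x = cv D.hroot + x := fun x => rfl
  rw [mul_apply', htr, aRefl_apply _ hnφ, aRefl_apply _ hnφ, cv_neg, inner_neg_left]
  module

lemma sgen_mem_W (j : Fin (D.r + 1)) : D.sgen j ∈ D.W := by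
  induction j using Fin.cases with
  | zero =>
    rw [sgen_zero_eq]
    have hφ : D.hroot ∈ D.Φ0 := D.pos_subset D.hroot_mem_pos
    refine mul_mem (Subgroup.subset_closure (Or.inr ?_)) (Subgroup.subset_closure (Or.inl ?_))
    · exact ⟨cv D.hroot, AddSubgroup.subset_closure ⟨D.hroot, hφ, rfl⟩, rfl⟩
    · exact ⟨-D.hroot, D.root_neg_mem _ hφ, rfl⟩
  | succ i =>
    have h1 : D.sgen i.succ = aRefl (D.simple i) 0 := by rw [Data.sgen, asimple_succ]
    rw [h1]
    exact Subgroup.subset_closure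
      (Or.inl ⟨D.simple i, D.pos_subset (D.simple_mem_pos i), rfl⟩)

lemma coxRefl_mem_W {g : E ≃ᵃ[ℝ] E} (hg : D.IsCoxRefl g) : g ∈ D.W := by
  obtain ⟨w₀, hw₀, j, rfl⟩ := hg
  exact mul_mem (mul_mem hw₀ (sgen_mem_W (D := D) j)) (inv_mem hw₀)

lemma coxRefl_form {g : E ≃ᵃ[ℝ] E} (hg : D.IsCoxRefl g) :
    ∃ b : E × ℝ, D.IsPosAff b ∧ g = aRefl b.1 b.2 := by
  obtain ⟨w₀, hw₀, j, hge⟩ := hg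
  have hW := W_isW (D := D) hw₀
  have hroot : D.IsAffRoot (wact w₀ (D.asimple j)) :=
    isAffRoot_wact hW ⟨asimple_fst_mem j, asimple_snd_int j⟩
  have h1 : g = aRefl (wact w₀ (D.asimple j)).1 (wact w₀ (D.asimple j)).2 := by
    rw [hge, show D.sgen j = aRefl (D.asimple j).1 (D.asimple j).2 from rfl]
    exact conj_aRefl' (D := D) hW (asimple_fst_mem j)
  rcases root_pos_or_neg (D := D) hroot with hp | hp
  · exact ⟨wact w₀ (D.asimple j), hp, h1⟩
  · refine ⟨-wact w₀ (D.asimple j), hp, ?_⟩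
    rw [h1, ← aRefl_pair_neg (root_ne_zero' (D := D) hroot.1)]

lemma precLE_trans {x y z : E} (h1 : D.precLE x y) (h2 : D.precLE y z) : D.precLE x z := by
  rcases h1 with h1 | rfl
  · rcases h2 with h2 | rfl
    · exact Or.inl (h1.trans h2)
    · exact Or.inl h1
  · exact h2

lemma bstep_step {u v : E ≃ᵃ[ℝ] E} (hu : u ∈ D.W) (h : D.bstep u v) {c : E}
    (hc : c ∈ D.Cbar) : D.precLE (u c) (v c) := by
  obtain ⟨⟨g, hg, rfl⟩, hlen⟩ := h
  obtain ⟨b, hbpos, hgb⟩ := coxRefl_form (D := D) hg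
  have hWu := W_isW (D := D) hu
  have hlen' : D.len u < D.len (aRefl b.1 b.2 * u) := by rwa [hgb] at hlen
  have hstep := step_precLE (D := D) hWu hbpos hlen' hc
  have happ : (g * u) c = aRefl b.1 b.2 (u c) := by rw [hgb]; rfl
  rwa [happ]

lemma bruhatLE_mem {u v : E ≃ᵃ[ℝ] E} (hu : u ∈ D.W) (h : D.bruhatLE u v) : v ∈ D.W := by
  induction h with
  | refl => exact hu
  | tail hab hbc ih =>
    obtain ⟨⟨g, hg, rfl⟩, -⟩ := hbc
    exact mul_mem (coxRefl_mem_W (D := D) hg) ih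


end DataAux

end SSV

/-- if `w ≤_B w′` in `W` then `w·c ⪯ w′·c` for every `c ∈ C̄₊`. -/
theorem statement9
    {E : Type*} [NormedAddCommGroup E] [InnerProductSpace ℝ E] [FiniteDimensional ℝ E]
    (D : SSV.Data E) (w w' : E ≃ᵃ[ℝ] E) (hw : w ∈ D.W) (hw' : w' ∈ D.W)
    (hB : D.bruhatLE w w') (c : E) (hc : c ∈ D.Cbar) :
    D.precLE (w c) (w' c) := by
  induction hB with
  | refl => exact Or.inr rfl
  | tail hab hbc ih =>
    have hbW := SSV.bruhatLE_mem (D := D) hw hab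
    exact SSV.precLE_trans (D := D) (ih hbW) (SSV.bstep_step (D := D) hbW hbc hc)
end
end

section
/- Let α ∈ Φ0+ and y ∈ E. (1) If α(y) < 0, then s_α·y − ℓ·α∨ ≺_α y for every integer ℓ with 0 ≤ ℓ ≤ −1 − ⌊α(y)⌋. (2) If α(y) is an integer greater than 1, then y − ℓ·α∨ ≺_α y for every integer ℓ with 1 ≤ ℓ ≤ α(y) − 1. (3) If α(y) > 1 and α(y) is not an integer, then s_α·y + ℓ·α∨ ≺_α y for every integer ℓ with 1 ≤ ℓ ≤ ⌊α(y)⌋. -/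
open scoped InnerProductSpace Classical

noncomputable section

namespace SSVAux
variable {E : Type*} [NormedAddCommGroup E] [InnerProductSpace ℝ E]

lemma lrefl_apply (α : E) (h : ⟪α, α⟫_ℝ ≠ 0) (y : E) :
    SSV.lrefl α y = y - (2 / ⟪α, α⟫_ℝ * ⟪α, y⟫_ℝ) • α := by
  unfold SSV.lrefl
  rw [dif_neg h]
  rw [Module.reflection_apply]
  rfl

lemma aRefl_apply (α : E) (h : ⟪α, α⟫_ℝ ≠ 0) (c : ℝ) (y : E) :
    SSV.aRefl α c y = y - ⟪α, y⟫_ℝ • SSV.cv α - c • SSV.cv α := by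
  unfold SSV.aRefl
  simp only [AffineEquiv.trans_apply, AffineEquiv.constVAdd_apply,
    LinearEquiv.coe_toAffineEquiv, lrefl_apply α h, SSV.cv, vadd_eq_add, smul_smul]
  module

lemma inner_cv (α : E) (h : ⟪α, α⟫_ℝ ≠ 0) : ⟪α, SSV.cv α⟫_ℝ = 2 := by
  simp only [SSV.cv, real_inner_smul_right]
  field_simp

lemma inner_aRefl (α : E) (h : ⟪α, α⟫_ℝ ≠ 0) (c : ℝ) (y : E) :
    ⟪α, SSV.aRefl α c y⟫_ℝ = -⟪α, y⟫_ℝ - 2 * c := by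
  rw [aRefl_apply α h, inner_sub_right, inner_sub_right, real_inner_smul_right,
    real_inner_smul_right, inner_cv α h]
  ring

end SSVAux

/-- root strings for `≺_α`: (1) if `α(y) < 0` then
`s_α y − ℓα∨ ≺_α y` for `0 ≤ ℓ ≤ −1−⌊α(y)⌋`; (2) if `α(y) ∈ ℤ_{>1}` then
`y − ℓα∨ ≺_α y` for `1 ≤ ℓ ≤ α(y)−1`; (3) if `α(y) ∈ ℝ_{>1} ∖ ℤ` then
`s_α y + ℓα∨ ≺_α y` for `1 ≤ ℓ ≤ ⌊α(y)⌋`. -/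
theorem statement13
    {E : Type*} [NormedAddCommGroup E] [InnerProductSpace ℝ E] [FiniteDimensional ℝ E]
    (D : SSV.Data E) (α : E) (hα : α ∈ D.pos) (y : E) :
    (⟪α, y⟫_ℝ < 0 → ∀ l : ℤ, 0 ≤ l → l ≤ -1 - ⌊⟪α, y⟫_ℝ⌋ →
      SSV.precA α (SSV.aRefl α 0 y - (l : ℝ) • SSV.cv α) y) ∧
    (∀ nn : ℤ, ⟪α, y⟫_ℝ = (nn : ℝ) → 1 < nn → ∀ l : ℤ, 1 ≤ l → l ≤ nn - 1 →
      SSV.precA α (y - (l : ℝ) • SSV.cv α) y) ∧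
    (1 < ⟪α, y⟫_ℝ → (¬∃ n : ℤ, ⟪α, y⟫_ℝ = (n : ℝ)) → ∀ l : ℤ, 1 ≤ l → l ≤ ⌊⟪α, y⟫_ℝ⌋ →
      SSV.precA α (SSV.aRefl α 0 y + (l : ℝ) • SSV.cv α) y) := by
  have hne : ⟪α, α⟫_ℝ ≠ 0 := by
    have h0 := D.root_ne_zero α (D.pos_subset hα)
    simpa [inner_self_eq_zero] using h0
  refine ⟨?_, ?_, ?_⟩
  · intro h l hl0 hl1
    have hpt : SSV.aRefl α 0 y - (l : ℝ) • SSV.cv α = SSV.aRefl α ((l : ℤ) : ℝ) y := by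
      rw [SSVAux.aRefl_apply α hne, SSVAux.aRefl_apply α hne]
      module
    refine ⟨⟨l, hpt⟩, ?_⟩
    have hv : ⟪α, SSV.aRefl α 0 y - (l : ℝ) • SSV.cv α⟫_ℝ = -⟪α, y⟫_ℝ - 2 * l := by
      rw [hpt, SSVAux.inner_aRefl α hne]
    rcases eq_or_lt_of_le hl0 with h0 | h0
    · right
      constructor
      · rw [hv, ← h0]; push_cast; ring
      · rw [hv, ← h0]; push_cast; linarith
    · left
      have hfl : ⟪α, y⟫_ℝ - 1 < (⌊⟪α, y⟫_ℝ⌋ : ℝ) := Int.sub_one_lt_floor _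
      have hl1' : (l : ℝ) ≤ -1 - (⌊⟪α, y⟫_ℝ⌋ : ℝ) := by exact_mod_cast hl1
      have hl0' : (1 : ℝ) ≤ (l : ℝ) := by exact_mod_cast h0
      rw [hv, abs_of_neg h, abs_lt]
      constructor <;> linarith
  · intro nn hnn hnn1 l hl1 hl2
    have hpt : y - (l : ℝ) • SSV.cv α = SSV.aRefl α (((l - nn : ℤ) : ℝ)) y := by
      rw [SSVAux.aRefl_apply α hne, hnn]
      push_cast
      module
    refine ⟨⟨l - nn, hpt⟩, Or.inl ?_⟩
    have hv : ⟪α, y - (l : ℝ) • SSV.cv α⟫_ℝ = -⟪α, y⟫_ℝ - 2 * ((l : ℝ) - (nn : ℝ)) := by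
      rw [hpt, SSVAux.inner_aRefl α hne]
      push_cast
      ring
    have hl1' : (1 : ℝ) ≤ (l : ℝ) := by exact_mod_cast hl1
    have hl2' : (l : ℝ) ≤ (nn : ℝ) - 1 := by exact_mod_cast hl2
    have hnn1' : (1 : ℝ) < (nn : ℝ) := by exact_mod_cast hnn1
    rw [hv, hnn, abs_of_pos (show (0:ℝ) < (nn:ℝ) by linarith), abs_lt]
    constructor <;> linarith
  · intro h hni l hl1 hl2
    have hpt : SSV.aRefl α 0 y + (l : ℝ) • SSV.cv α = SSV.aRefl α (((-l : ℤ) : ℝ)) y := by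
      rw [SSVAux.aRefl_apply α hne, SSVAux.aRefl_apply α hne]
      push_cast
      module
    refine ⟨⟨-l, hpt⟩, Or.inl ?_⟩
    have hv : ⟪α, SSV.aRefl α 0 y + (l : ℝ) • SSV.cv α⟫_ℝ = -⟪α, y⟫_ℝ + 2 * (l : ℝ) := by
      rw [hpt, SSVAux.inner_aRefl α hne]
      push_cast
      ring
    have hlt : (⌊⟪α, y⟫_ℝ⌋ : ℝ) < ⟪α, y⟫_ℝ := by
      rcases lt_or_eq_of_le (Int.floor_le ⟪α, y⟫_ℝ) with h' | h'
      · exact h'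
      · exact absurd ⟨⌊⟪α, y⟫_ℝ⌋, h'.symm⟩ hni
    have hl1' : (1 : ℝ) ≤ (l : ℝ) := by exact_mod_cast hl1
    have hl2' : (l : ℝ) ≤ (⌊⟪α, y⟫_ℝ⌋ : ℝ) := by exact_mod_cast hl2
    rw [hv, abs_of_pos (show (0:ℝ) < ⟪α, y⟫_ℝ by linarith), abs_lt]
    constructor <;> linarith
end
end

section
/- Let Ē− := {y ∈ E : α(y) ≤ 0 for all α ∈ Φ0+}. If c ∈ C̄+ and y ∈ (W·c) ∩ Ē−, then y = v·c + μ for some v ∈ W0 and some μ ∈ Q∨ ∩ Ē−. -/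
open scoped InnerProductSpace Classical

noncomputable section

namespace SSV

variable {E : Type*} [NormedAddCommGroup E] [InnerProductSpace ℝ E]

section Statement14Aux

variable {D : Data E}

lemma s14_inner_self_ne {α : E} (hα : α ≠ 0) : ⟪α, α⟫_ℝ ≠ 0 :=
  fun h => hα (inner_self_eq_zero.mp h)

lemma s14_inner_self_pos {α : E} (hα : α ≠ 0) : 0 < ⟪α, α⟫_ℝ :=
  lt_of_le_of_ne real_inner_self_nonneg fun h => (s14_inner_self_ne hα) h.symm

lemma s14_lrefl_apply {α : E} (hα : α ≠ 0) (y : E) :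
    lrefl α y = y - ⟪α, y⟫_ℝ • cv α := by
  have h := s14_inner_self_ne hα
  rw [lrefl, dif_neg h, Module.reflection_apply]
  simp only [rootForm, LinearMap.coe_mk, AddHom.coe_mk]
  rw [cv, smul_smul, mul_comm]

lemma s14_lrefl_invol (α : E) : Function.Involutive (lrefl α) := by
  rw [lrefl]
  split
  · exact fun x => rfl
  · exact Module.involutive_reflection _

lemma s14_aRefl_zero (α : E) (y : E) : aRefl α 0 y = lrefl α y := by
  simp [aRefl, tr]

/-- Bundle of properties of elements of `W0`. -/
def s14Q (D : Data E) (v : E ≃ᵃ[ℝ] E) : Prop :=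
  v 0 = 0 ∧ (∀ β ∈ D.Φ0, ∃ γ ∈ D.Φ0, ∀ x, ⟪β, v x⟫_ℝ = ⟪γ, x⟫_ℝ) ∧
    (∀ μ ∈ D.Qv, v μ ∈ D.Qv)

lemma s14Q_mul {u v : E ≃ᵃ[ℝ] E} (hu : s14Q D u) (hv : s14Q D v) : s14Q D (u * v) := by
  obtain ⟨h0u, hau, hqu⟩ := hu
  obtain ⟨h0v, hav, hqv⟩ := hv
  have hc : ∀ x, (u * v) x = u (v x) := fun x => rfl
  refine ⟨?_, ?_, ?_⟩
  · rw [hc, h0v, h0u]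
  · intro β hβ
    obtain ⟨γ, hγ, hγeq⟩ := hau β hβ
    obtain ⟨δ, hδ, hδeq⟩ := hav γ hγ
    exact ⟨δ, hδ, fun x => by rw [hc, hγeq, hδeq]⟩
  · intro μ hμ
    rw [hc]
    exact hqu _ (hqv _ hμ)

lemma s14Q_gen {α : E} (hα : α ∈ D.Φ0) : s14Q D (aRefl α 0) := by
  have hne : α ≠ 0 := D.root_ne_zero α hα
  refine ⟨?_, ?_, ?_⟩
  · rw [s14_aRefl_zero, s14_lrefl_apply hne]
    simp
  · intro β hβ
    refine ⟨lrefl α β, ?_, ?_⟩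
    · have := D.root_refl_mem α hα β hβ
      rwa [s14_aRefl_zero] at this
    · intro x
      rw [s14_aRefl_zero, s14_lrefl_apply hne, s14_lrefl_apply hne,
        inner_sub_right, inner_sub_left]
      simp only [cv, real_inner_smul_left, real_inner_smul_right]
      rw [real_inner_comm α β]
      ring
  · intro μ hμ
    rw [s14_aRefl_zero]
    induction hμ using AddSubgroup.closure_induction with
    | mem z hz =>
      obtain ⟨β, hβ, rfl⟩ := hz
      rw [s14_lrefl_apply hne]
      obtain ⟨n, hn⟩ := D.root_crystal α hα β hβ
      rw [real_inner_comm, hn, Int.cast_smul_eq_zsmul]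
      exact sub_mem
        (AddSubgroup.subset_closure (Set.mem_image_of_mem cv (Finset.mem_coe.mpr hβ)))
        (zsmul_mem
          (AddSubgroup.subset_closure (Set.mem_image_of_mem cv (Finset.mem_coe.mpr hα))) n)
    | zero => rw [map_zero]; exact zero_mem _
    | add a b _ _ pa pb => rw [map_add]; exact add_mem pa pb
    | neg a _ pa => rw [map_neg]; exact neg_mem pa

lemma s14_W0_prop {v : E ≃ᵃ[ℝ] E} (hv : v ∈ D.W0) : s14Q D v ∧ s14Q D v⁻¹ := by
  induction hv using Subgroup.closure_induction with
  | mem g hg =>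
    obtain ⟨α, hα, rfl⟩ := hg
    have hq := s14Q_gen (D := D) hα
    have hself : ∀ y, aRefl α 0 (aRefl α 0 y) = y := by
      intro y
      rw [s14_aRefl_zero, s14_aRefl_zero]
      exact s14_lrefl_invol α _
    have hone : aRefl α 0 * aRefl α 0 = 1 := by
      apply AffineEquiv.ext
      intro y
      rw [show (aRefl α 0 * aRefl α 0) y = aRefl α 0 (aRefl α 0 y) from rfl, hself]
      rfl
    have hinv : (aRefl α 0)⁻¹ = aRefl α 0 := inv_eq_of_mul_eq_one_left hone
    exact ⟨hq, by rw [hinv]; exact hq⟩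
  | one =>
    have h1 : s14Q D (1 : E ≃ᵃ[ℝ] E) :=
      ⟨rfl, fun β hβ => ⟨β, hβ, fun x => rfl⟩, fun μ hμ => hμ⟩
    exact ⟨h1, by rw [inv_one]; exact h1⟩
  | mul x y hx hy px py =>
    refine ⟨s14Q_mul px.1 py.1, ?_⟩
    rw [mul_inv_rev]
    exact s14Q_mul py.2 px.2
  | inv x hx px => exact ⟨px.2, by rw [inv_inv]; exact px.1⟩

lemma s14_add {v : E ≃ᵃ[ℝ] E} (h0 : v 0 = 0) (x μ : E) : v (x + μ) = v x + v μ := by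
  have h2 : v μ = v.linear μ := by
    have := v.map_vadd 0 μ
    simpa [h0] using this
  have h1 : v (μ +ᵥ x) = v.linear μ +ᵥ v x := v.map_vadd x μ
  rw [add_comm x μ, show μ + x = μ +ᵥ x from rfl, h1, h2]
  exact add_comm _ _

lemma s14_neg {v : E ≃ᵃ[ℝ] E} (h0 : v 0 = 0) (x : E) : v (-x) = -(v x) := by
  have := s14_add h0 x (-x)
  rw [add_neg_cancel, h0] at this
  exact eq_neg_of_add_eq_zero_right this.symm

lemma s14_W_decomp {w : E ≃ᵃ[ℝ] E} (hw : w ∈ D.W) :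
    ∃ v ∈ D.W0, ∃ μ ∈ D.Qv, ∀ x, w x = v x + μ := by
  induction hw using Subgroup.closure_induction with
  | mem g hg =>
    rcases hg with hg | hg
    · exact ⟨g, Subgroup.subset_closure hg, 0, zero_mem _, fun x => (add_zero _).symm⟩
    · obtain ⟨μ, hμ, rfl⟩ := hg
      refine ⟨1, one_mem _, μ, hμ, fun x => ?_⟩
      show μ +ᵥ x = x + μ
      exact add_comm μ x
  | one => exact ⟨1, one_mem _, 0, zero_mem _, fun x => (add_zero _).symm⟩
  | mul x y hx hy px py =>
    obtain ⟨v1, hv1, μ1, hμ1, he1⟩ := px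
    obtain ⟨v2, hv2, μ2, hμ2, he2⟩ := py
    have q1 := (s14_W0_prop hv1).1
    refine ⟨v1 * v2, mul_mem hv1 hv2, v1 μ2 + μ1, add_mem (q1.2.2 μ2 hμ2) hμ1, fun z => ?_⟩
    rw [show (x * y) z = x (y z) from rfl, he2, he1, s14_add q1.1,
      show (v1 * v2) z = v1 (v2 z) from rfl, add_assoc]
  | inv x hx px =>
    obtain ⟨v, hv, μ, hμ, he⟩ := px
    have q := s14_W0_prop hv
    refine ⟨v⁻¹, inv_mem hv, -(v⁻¹ μ), neg_mem (q.2.2.2 μ hμ), fun z => ?_⟩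
    have hvv : ∀ t, v (v⁻¹ t) = t := fun t => v.apply_symm_apply t
    have hzz : x (v⁻¹ z + -(v⁻¹ μ)) = z := by
      rw [he, s14_add q.1.1, s14_neg q.1.1, hvv, hvv]
      abel
    have hfin : x.symm (x (v⁻¹ z + -(v⁻¹ μ))) = v⁻¹ z + -(v⁻¹ μ) :=
      x.symm_apply_apply _
    rw [hzz] at hfin
    exact hfin

lemma s14_Cbar_bound {c : E} (hc : c ∈ D.Cbar) {α : E} (hα : α ∈ D.pos) :
    0 ≤ ⟪α, c⟫_ℝ ∧ ⟪α, c⟫_ℝ ≤ 1 := by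
  have hcont : Continuous fun y : E => ⟪α, y⟫_ℝ := continuous_const.inner continuous_id
  have hclosed : IsClosed {y : E | 0 ≤ ⟪α, y⟫_ℝ ∧ ⟪α, y⟫_ℝ ≤ 1} :=
    IsClosed.inter (isClosed_le continuous_const hcont) (isClosed_le hcont continuous_const)
  have hsub : D.Cp ⊆ {y : E | 0 ≤ ⟪α, y⟫_ℝ ∧ ⟪α, y⟫_ℝ ≤ 1} := fun y hy =>
    ⟨(hy α hα).1.le, (hy α hα).2.le⟩
  exact closure_minimal hsub hclosed hc

lemma s14_Cbar_bound' {c : E} (hc : c ∈ D.Cbar) {γ : E} (hγ : γ ∈ D.Φ0) :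
    |⟪γ, c⟫_ℝ| ≤ 1 := by
  rcases D.pos_dichotomy γ hγ with ⟨h1, _⟩ | ⟨_, h2⟩
  · obtain ⟨a, b⟩ := s14_Cbar_bound hc h1
    rw [abs_le]
    constructor <;> linarith
  · obtain ⟨a, b⟩ := s14_Cbar_bound hc h2
    rw [inner_neg_left] at a b
    rw [abs_le]
    constructor <;> linarith

lemma s14_Qv_int {β : E} (hβ : β ∈ D.Φ0) {μ : E} (hμ : μ ∈ D.Qv) :
    ∃ n : ℤ, ⟪β, μ⟫_ℝ = n := by
  induction hμ using AddSubgroup.closure_induction with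
  | mem z hz =>
    obtain ⟨γ, hγ, rfl⟩ := hz
    obtain ⟨n, hn⟩ := D.root_crystal β hβ γ hγ
    exact ⟨n, by rw [real_inner_comm]; exact hn⟩
  | zero => exact ⟨0, by simp⟩
  | add a b _ _ pa pb =>
    obtain ⟨n, hn⟩ := pa
    obtain ⟨m, hm⟩ := pb
    exact ⟨n + m, by rw [inner_add_right, hn, hm]; push_cast; ring⟩
  | neg a _ pa =>
    obtain ⟨n, hn⟩ := pa
    exact ⟨-n, by rw [inner_neg_right, hn]; push_cast; ring⟩

lemma s14_refl_simple_pos (D : Data E) (i : Fin D.r) {β : E} (hβ : β ∈ D.pos)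
    (hne : β ≠ D.simple i) : lrefl (D.simple i) β ∈ D.pos := by
  set a := D.simple i with ha
  have hamem : a ∈ D.Φ0 := D.pos_subset (D.simple_mem_pos i)
  have hane : a ≠ 0 := D.root_ne_zero a hamem
  have hβ0 : β ∈ D.Φ0 := D.pos_subset hβ
  have hγ : lrefl a β ∈ D.Φ0 := by
    have := D.root_refl_mem a hamem β hβ0
    rwa [s14_aRefl_zero] at this
  by_contra hnp
  have hneg : -(lrefl a β) ∈ D.pos := by
    rcases D.pos_dichotomy _ hγ with ⟨h, _⟩ | ⟨_, h⟩
    · exact absurd h hnp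
    · exact h
  obtain ⟨n, hn⟩ := D.pos_nat_comb β hβ
  obtain ⟨m, hm⟩ := D.pos_nat_comb _ hneg
  set k : ℝ := ⟪a, β⟫_ℝ * (2 / ⟪a, a⟫_ℝ) with hk
  have hlin : β - lrefl a β = k • a := by
    rw [s14_lrefl_apply hane, hk]
    simp only [cv, smul_smul]
    abel
  have key : ∑ j, ((n j : ℝ) + (m j : ℝ) - (if j = i then k else 0)) • D.simple j = 0 := by
    simp only [sub_smul, add_smul, ite_smul, zero_smul, Finset.sum_sub_distrib,
      Finset.sum_add_distrib, ← hn, ← hm]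
    rw [Finset.sum_ite_eq' Finset.univ i (fun j => k • D.simple j)]
    simp only [Finset.mem_univ, if_true, ← ha]
    rw [← hlin]
    abel
  have hz := Fintype.linearIndependent_iff.mp D.simple_indep _ key
  have hnz : ∀ j, j ≠ i → (n j : ℝ) = 0 := by
    intro j hj
    have := hz j
    rw [if_neg hj] at this
    have h1 : (0:ℝ) ≤ (n j : ℝ) := Nat.cast_nonneg _
    have h2 : (0:ℝ) ≤ (m j : ℝ) := Nat.cast_nonneg _
    linarith
  have hβa : β = (n i : ℝ) • a := by
    rw [hn, Finset.sum_eq_single i]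
    · intro b _ hb
      rw [hnz b hb, zero_smul]
    · intro h
      exact absurd (Finset.mem_univ i) h
  rcases D.root_reduced a hamem (n i : ℝ) (by rw [← hβa]; exact hβ0) with h | h
  · apply hne
    rw [hβa, h, one_smul]
  · have : (0:ℝ) ≤ (n i : ℝ) := Nat.cast_nonneg _
    rw [h] at this
    linarith

lemma s14_rho_simple (D : Data E) (i : Fin D.r) :
    ∑ β ∈ D.pos, ⟪β, cv (D.simple i)⟫_ℝ = 2 := by
  set a := D.simple i with ha
  have hamem : a ∈ D.Φ0 := D.pos_subset (D.simple_mem_pos i)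
  have hane : a ≠ 0 := D.root_ne_zero a hamem
  have hspos : (0:ℝ) < ⟪a, a⟫_ℝ := s14_inner_self_pos hane
  have hmem : a ∈ D.pos := D.simple_mem_pos i
  rw [← Finset.add_sum_erase _ _ hmem]
  have h1 : ⟪a, cv a⟫_ℝ = 2 := by
    rw [cv, real_inner_smul_right]
    field_simp
  have hgen : ∀ β, ⟪β, cv a⟫_ℝ + ⟪lrefl a β, cv a⟫_ℝ = 0 := by
    intro β
    rw [s14_lrefl_apply hane, inner_sub_left, real_inner_smul_left]
    simp only [cv, real_inner_smul_left, real_inner_smul_right]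
    rw [real_inner_comm a β]
    field_simp
    ring
  have h2 : ∑ β ∈ D.pos.erase a, ⟪β, cv a⟫_ℝ = 0 := by
    apply Finset.sum_involution (g := fun β _ => lrefl a β)
    · intro β _
      exact hgen β
    · intro β hβ hf hgg
      apply hf
      have := hgen β
      rw [hgg] at this
      linarith
    · intro β hβ
      rw [Finset.mem_erase] at hβ ⊢
      obtain ⟨hβne, hβpos⟩ := hβ
      refine ⟨?_, s14_refl_simple_pos D i hβpos (by rw [← ha]; exact hβne)⟩
      intro hEq
      have hβval : β = lrefl a a := by
        have h := s14_lrefl_invol a β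
        rw [hEq] at h
        exact h.symm
      have hla : lrefl a a = -a := by
        rw [s14_lrefl_apply hane]
        simp only [cv, smul_smul]
        rw [mul_comm, div_mul_cancel₀ _ (ne_of_gt hspos), two_smul]
        abel
      rw [hla] at hβval
      rcases D.pos_dichotomy a hamem with ⟨_, hna⟩ | ⟨hnp, _⟩
      · exact hna (hβval ▸ hβpos)
      · exact hnp hmem
    · intro β hβ
      exact s14_lrefl_invol a β
  rw [h1, h2, add_zero]

lemma s14_rho_cv_pos (D : Data E) {α : E} (hα : α ∈ D.pos) :
    0 < ∑ β ∈ D.pos, ⟪β, cv α⟫_ℝ := by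
  have hαΦ : α ∈ D.Φ0 := D.pos_subset hα
  have hane : α ≠ 0 := D.root_ne_zero α hαΦ
  have hspos : (0:ℝ) < ⟪α, α⟫_ℝ := s14_inner_self_pos hane
  have hsum : ∀ z : E, ∑ β ∈ D.pos, ⟪β, z⟫_ℝ = ⟪∑ β ∈ D.pos, β, z⟫_ℝ := fun z => by
    rw [sum_inner]
  set ρ : E := ∑ β ∈ D.pos, β with hρ
  have hsimple : ∀ j : Fin D.r, ⟪ρ, D.simple j⟫_ℝ = ⟪D.simple j, D.simple j⟫_ℝ := by
    intro j
    have hjne : D.simple j ≠ 0 :=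
      D.root_ne_zero _ (D.pos_subset (D.simple_mem_pos j))
    have hjpos : (0:ℝ) < ⟪D.simple j, D.simple j⟫_ℝ := s14_inner_self_pos hjne
    have h2 := s14_rho_simple D j
    rw [hsum] at h2
    rw [cv, real_inner_smul_right] at h2
    rw [div_mul_eq_mul_div, eq_comm, eq_div_iff (ne_of_gt hjpos)] at h2
    linarith
  obtain ⟨n, hn⟩ := D.pos_nat_comb α hα
  have hinner : ⟪ρ, α⟫_ℝ = ∑ j, (n j : ℝ) * ⟪D.simple j, D.simple j⟫_ℝ := by
    rw [hn, inner_sum]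
    exact Finset.sum_congr rfl fun j _ => by rw [real_inner_smul_right, hsimple]
  have hex : ∃ j, n j ≠ 0 := by
    by_contra hno
    push_neg at hno
    apply hane
    rw [hn]
    simp [hno]
  obtain ⟨j0, hj0⟩ := hex
  have hpos : 0 < ⟪ρ, α⟫_ℝ := by
    rw [hinner]
    apply Finset.sum_pos'
    · intro j _
      have hjne : D.simple j ≠ 0 :=
        D.root_ne_zero _ (D.pos_subset (D.simple_mem_pos j))
      have := s14_inner_self_pos hjne
      positivity
    · refine ⟨j0, Finset.mem_univ _, ?_⟩
      have hjne : D.simple j0 ≠ 0 :=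
        D.root_ne_zero _ (D.pos_subset (D.simple_mem_pos j0))
      have h1 := s14_inner_self_pos hjne
      have h2 : (0:ℝ) < (n j0 : ℝ) := by
        exact_mod_cast Nat.pos_of_ne_zero hj0
      positivity
  rw [hsum, cv, real_inner_smul_right]
  exact mul_pos (div_pos two_pos hspos) hpos

end Statement14Aux


end SSV

/-- if `c ∈ C̄₊` and `y ∈ (W·c) ∩ Ē₋`, then `y = v·c + μ` for some
`v ∈ W0` and some `μ ∈ Q∨ ∩ Ē₋`. -/
theorem statement14
    {E : Type*} [NormedAddCommGroup E] [InnerProductSpace ℝ E] [FiniteDimensional ℝ E]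
    (D : SSV.Data E) (c : E) (hc : c ∈ D.Cbar) (y : E) (hy : y ∈ D.Orb c)
    (hneg : ∀ α ∈ D.pos, ⟪α, y⟫_ℝ ≤ 0) :
    ∃ v ∈ D.W0, ∃ μ ∈ D.Qv, (∀ α ∈ D.pos, ⟪α, μ⟫_ℝ ≤ 0) ∧ y = v c + μ := by
  classical
  obtain ⟨w, hw, hwc⟩ := hy
  obtain ⟨v0, hv0, μ0, hμ0, he0⟩ := SSV.s14_W_decomp hw
  set N : E → ℝ := fun z => ∑ β ∈ D.pos, ⟪β, z⟫_ℝ with hN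
  have hNint : ∀ μ ∈ D.Qv, ∃ n : ℤ, N μ = (n : ℝ) := by
    intro μ hμ
    have hall : ∀ β ∈ D.pos, ∃ n : ℤ, ⟪β, μ⟫_ℝ = (n : ℝ) := fun β hβ =>
      SSV.s14_Qv_int (D.pos_subset hβ) hμ
    choose f hf using hall
    refine ⟨∑ β ∈ D.pos.attach, f β.1 β.2, ?_⟩
    show (∑ β ∈ D.pos, ⟪β, μ⟫_ℝ) = _
    rw [← Finset.sum_attach D.pos (fun β => ⟪β, μ⟫_ℝ)]
    push_cast
    exact Finset.sum_congr rfl fun β _ => hf β.1 β.2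
  set P : ℤ → Prop := fun n =>
    ∃ v ∈ D.W0, ∃ μ ∈ D.Qv, y = v c + μ ∧ N μ = (n : ℝ) with hP
  have hvcbound : ∀ v : E ≃ᵃ[ℝ] E, v ∈ D.W0 → ∀ β ∈ D.pos, |⟪β, v c⟫_ℝ| ≤ 1 := by
    intro v hv β hβ
    obtain ⟨γ, hγ, hγeq⟩ := (SSV.s14_W0_prop hv).1.2.1 β (D.pos_subset hβ)
    rw [hγeq]
    exact SSV.s14_Cbar_bound' hc hγ
  have Hbdd : ∃ b : ℤ, ∀ n : ℤ, P n → b ≤ n := by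
    refine ⟨⌊N y⌋ - (D.pos.card : ℤ), ?_⟩
    rintro n ⟨v, hv, μ, hμ, heq, hNμ⟩
    have hμeq : ∀ β : E, ⟪β, μ⟫_ℝ = ⟪β, y⟫_ℝ - ⟪β, v c⟫_ℝ := by
      intro β
      rw [heq, inner_add_right]
      ring
    have hNvc : N (v c) ≤ (D.pos.card : ℝ) := by
      rw [hN]
      calc ∑ β ∈ D.pos, ⟪β, v c⟫_ℝ ≤ ∑ β ∈ D.pos, (1:ℝ) :=
            Finset.sum_le_sum fun β hβ => (abs_le.mp (hvcbound v hv β hβ)).2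
        _ = (D.pos.card : ℝ) := by simp
    have hsplit : N μ = N y - N (v c) := by
      simp only [hN, hμeq, Finset.sum_sub_distrib]
    have h1 : ((⌊N y⌋ - (D.pos.card : ℤ) : ℤ) : ℝ) ≤ (n : ℝ) := by
      push_cast
      have := Int.floor_le (N y)
      linarith [hNμ ▸ hsplit]
    exact_mod_cast h1
  have Hinh : ∃ n : ℤ, P n := by
    obtain ⟨n0, hn0⟩ := hNint μ0 hμ0
    exact ⟨n0, v0, hv0, μ0, hμ0, by rw [← hwc, he0 c], hn0⟩
  obtain ⟨n, ⟨v, hv, μ, hμ, heq, hNμ⟩, hmin⟩ := Int.exists_least_of_bdd Hbdd Hinh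
  refine ⟨v, hv, μ, hμ, ?_, heq⟩
  intro α hα
  by_contra hcon
  push_neg at hcon
  have hαΦ : α ∈ D.Φ0 := D.pos_subset hα
  have hαne : α ≠ 0 := D.root_ne_zero α hαΦ
  obtain ⟨kint, hk⟩ := SSV.s14_Qv_int hαΦ hμ
  have hk1 : (1 : ℤ) ≤ kint := by
    have : (0:ℤ) < kint := by exact_mod_cast hk ▸ hcon
    omega
  have hμval : ⟪α, μ⟫_ℝ = ⟪α, y⟫_ℝ - ⟪α, v c⟫_ℝ := by
    rw [heq, inner_add_right]; ring
  have hb := hvcbound v hv α hα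
  have hvcge : -1 ≤ ⟪α, v c⟫_ℝ := (abs_le.mp hb).1
  have hy0 : ⟪α, y⟫_ℝ ≤ 0 := hneg α hα
  have hvc1 : ⟪α, v c⟫_ℝ = -1 := by
    have hk1' : (1:ℝ) ≤ (kint : ℝ) := by exact_mod_cast hk1
    linarith [hk ▸ hμval]
  set v' := SSV.aRefl α 0 * v with hv'def
  have hv' : v' ∈ D.W0 :=
    mul_mem (Subgroup.subset_closure ⟨α, hαΦ, rfl⟩) hv
  have hμ' : μ - SSV.cv α ∈ D.Qv :=
    sub_mem hμ (AddSubgroup.subset_closure ⟨α, hαΦ, rfl⟩)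
  have hv'c : v' c = v c + SSV.cv α := by
    rw [show v' c = SSV.aRefl α 0 (v c) from rfl, SSV.s14_aRefl_zero,
      SSV.s14_lrefl_apply hαne, hvc1]
    simp
  have heq' : y = v' c + (μ - SSV.cv α) := by
    rw [hv'c, heq]
    abel
  obtain ⟨n', hn'⟩ := hNint _ hμ'
  have hNdiff : N (μ - SSV.cv α) = N μ - ∑ β ∈ D.pos, ⟪β, SSV.cv α⟫_ℝ := by
    simp only [hN, inner_sub_right, Finset.sum_sub_distrib]
  have hlt : (n' : ℝ) < (n : ℝ) := by
    have hpos := SSV.s14_rho_cv_pos D hα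
    rw [hn', hNμ] at hNdiff
    linarith
  have hle : n ≤ n' := hmin n' ⟨v', hv', μ - SSV.cv α, hμ', heq', hn'⟩
  have : (n:ℝ) ≤ (n':ℝ) := by exact_mod_cast hle
  linarith
end
end
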